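/- arXiv:1504.00427 — 3 statements merged into one kernel-verified Lean document; each statement's English description precedes it below -/
import Mathlib

section
/- Let (V,d,b) be an information network, T ≥ 1, and v* a non-void node such that the set function A ↦ (1/T) ∑_{t=1}^T E[X^t_{v*}(A,∅)] on subsets of V\{d} is not submodular. Consider the information network (V',d,b') obtained by adding a finite set L of new nodes, each having a single outgoing edge of weight 1 to v* (all other weights unchanged). Then for all sufficiently large |L|, the expected influence σ̄' of the new network over the period [1,T+1], as a set function of the transient initial set (with empty permanent set), is not submodular; moreover the failure of submodularity is witnessed by subsets of V\{d}. -/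
open MeasureTheory
open scoped ENNReal

/-- An information network: a finite node set `V` with a distinguished void node `d`
and a row-stochastic weight matrix `b` with entries in `[0,1]` and `b d d = 1`. -/
structure InfoNetwork (V : Type*) [Fintype V] where
  d : V
  b : V → V → ℝ
  b_nonneg : ∀ v u, 0 ≤ b v u
  b_le_one : ∀ v u, b v u ≤ 1
  row_sum : ∀ v, ∑ u, b v u = 1
  void_loop : b d d = 1

/-- The uniform probability measure on the interval `(0,1)`. -/
noncomputable def unifMeasure : Measure ℝ := volume.restrict (Set.Ioo (0:ℝ) 1)

/-- Product over `V` of uniform measures on `(0,1)`: the distribution of the thresholds. -/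
noncomputable def thresholdMeasure (V : Type*) [Fintype V] : Measure (V → ℝ) :=
  Measure.pi fun _ : V => unifMeasure

namespace InfoNetwork

variable {V : Type*} [Fintype V]

/-- The set of active nodes at time `t` under the non-progressive linear threshold model,
with transient initial set `A`, permanent initial set `Ahat` and thresholds `θ`. -/
noncomputable def activeSet (N : InfoNetwork V) (A Ahat : Set V) (θ : V → ℝ) : ℕ → Set V
  | 0 => A ∪ Ahat
  | t+1 => Ahat ∪
      {v | v ∉ Ahat ∧ θ v ≤ ∑ u, (N.activeSet A Ahat θ t).indicator (N.b v) u}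

/-- `E[X^t_v(A,Ahat)]`: the probability (over the random thresholds) that `v` is active
at time `t`. -/
noncomputable def EX (N : InfoNetwork V) (A Ahat : Set V) (t : ℕ) (v : V) : ℝ :=
  (thresholdMeasure V {θ | v ∈ N.activeSet A Ahat θ t}).toReal

/-- The expected influence over the period `[1,T]`. -/
noncomputable def sigmaBar (N : InfoNetwork V) (T : ℕ) (A Ahat : Set V) : ℝ :=
  (1 / (T : ℝ)) * ∑ t ∈ Finset.Icc 1 T, ∑ v, N.EX A Ahat t v

/-- The edge relation of the directed graph on `V \ {d}`. -/
def edgeRel (N : InfoNetwork V) (v u : V) : Prop :=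
  v ≠ N.d ∧ u ≠ N.d ∧ 0 < N.b v u

/-- The network is acyclic if the directed graph on `V \ {d}` has no directed cycle. -/
def Acyclic (N : InfoNetwork V) : Prop :=
  ∀ v, ¬ Relation.TransGen N.edgeRel v v

end InfoNetwork

/-- A real-valued set function `f` is submodular on the ground set `S`. -/
def SubmodularOn {V : Type*} (S : Set V) (f : Set V → ℝ) : Prop :=
  ∀ A B : Set V, A ⊆ B → B ⊆ S → ∀ w ∈ S, w ∉ B →
    f (insert w B) - f B ≤ f (insert w A) - f A

/-- The information network obtained from `N` by adding `n` new nodes, each having a single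
outgoing edge of weight `1` to `vstar` (all other weights unchanged). -/
noncomputable def extendNet {V : Type*} [Fintype V] [DecidableEq V] (N : InfoNetwork V)
    (vstar : V) (n : ℕ) : InfoNetwork (V ⊕ Fin n) where
  d := Sum.inl N.d
  b x y :=
    match x, y with
    | Sum.inl v, Sum.inl u => N.b v u
    | Sum.inl _, Sum.inr _ => 0
    | Sum.inr _, Sum.inl u => if u = vstar then 1 else 0
    | Sum.inr _, Sum.inr _ => 0
  b_nonneg := by
    rintro (v | l) (u | m)
    · exact N.b_nonneg _ _
    · exact le_refl 0
    · dsimp only; split_ifs <;> norm_num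
    · exact le_refl 0
  b_le_one := by
    rintro (v | l) (u | m)
    · exact N.b_le_one _ _
    · norm_num
    · dsimp only; split_ifs <;> norm_num
    · norm_num
  row_sum := by
    rintro (v | l)
    · rw [Fintype.sum_sum_type]
      simpa using N.row_sum v
    · rw [Fintype.sum_sum_type]
      simp
  void_loop := N.void_loop

instance : IsProbabilityMeasure unifMeasure :=
  ⟨by simp [unifMeasure, Real.volume_Ioo]⟩

instance (V : Type*) [Fintype V] : IsProbabilityMeasure (thresholdMeasure V) := by
  unfold thresholdMeasure; infer_instance

lemma thresholdMeasure_coord (V : Type*) [Fintype V] (j : V) (s : Set ℝ) :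
    thresholdMeasure V {θ | θ j ∈ s} = unifMeasure s := by
  classical
  have : {θ : V → ℝ | θ j ∈ s} = Set.pi Set.univ (Function.update (fun _ => (Set.univ : Set ℝ)) j s) := by
    ext θ
    simp only [Set.mem_setOf_eq, Set.mem_pi, Set.mem_univ, true_implies]
    constructor
    · intro h i
      rcases eq_or_ne i j with rfl | hij
      · simpa using h
      · simp [Function.update_of_ne hij]
    · intro h; simpa using h j
  rw [this, thresholdMeasure, Measure.pi_pi]
  rw [Finset.prod_eq_single j]
  · simp
  · intro i _ hij; simp [Function.update_of_ne hij]
  · simp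

namespace InfoNetwork
variable {V : Type*} [Fintype V]

lemma measurableSet_mem_activeSet (N : InfoNetwork V) (A Ahat : Set V) :
    ∀ t (v : V), MeasurableSet {θ : V → ℝ | v ∈ N.activeSet A Ahat θ t} := by
  intro t
  induction t with
  | zero =>
    intro v
    by_cases h : v ∈ A ∪ Ahat
    · simp only [activeSet]
      convert MeasurableSet.univ using 1
      ext θ; simp [h]
    · simp only [activeSet]
      convert MeasurableSet.empty using 1
      ext θ; simp [h]
  | succ t ih =>
    classical
    intro v
    by_cases hv : v ∈ Ahat
    · convert MeasurableSet.univ using 1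
      ext θ; simp [activeSet, hv]
    · have hset : {θ : V → ℝ | v ∈ N.activeSet A Ahat θ (t+1)} =
        {θ : V → ℝ | θ v ≤ ∑ u, (N.activeSet A Ahat θ t).indicator (N.b v) u} := by
        ext θ; simp [activeSet, hv]
      rw [hset]
      have hF : Measurable fun θ : V → ℝ =>
          ∑ u, (N.activeSet A Ahat θ t).indicator (N.b v) u := by
        apply Finset.measurable_sum
        intro u _
        have : (fun θ : V → ℝ => (N.activeSet A Ahat θ t).indicator (N.b v) u) =
            fun θ => if θ ∈ {θ : V → ℝ | u ∈ N.activeSet A Ahat θ t} then N.b v u else 0 := by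
          ext θ; rw [Set.indicator_apply]; rfl
        rw [this]
        exact Measurable.ite (ih u) measurable_const measurable_const
      exact measurableSet_le (measurable_pi_apply v) hF

lemma EX_nonneg (N : InfoNetwork V) (A Ahat : Set V) (t : ℕ) (v : V) :
    0 ≤ N.EX A Ahat t v := ENNReal.toReal_nonneg

lemma EX_le_one (N : InfoNetwork V) (A Ahat : Set V) (t : ℕ) (v : V) :
    N.EX A Ahat t v ≤ 1 := by
  rw [EX]
  have h := prob_le_one (μ := thresholdMeasure V)
    (s := {θ | v ∈ N.activeSet A Ahat θ t})
  calc (thresholdMeasure V {θ | v ∈ N.activeSet A Ahat θ t}).toReal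
      ≤ (1 : ℝ≥0∞).toReal := ENNReal.toReal_mono (by norm_num) h
    _ = 1 := by simp

lemma EX_zero_mem (N : InfoNetwork V) (A : Set V) (v : V) (h : v ∈ A) :
    N.EX A ∅ 0 v = 1 := by
  rw [EX]
  have : {θ : V → ℝ | v ∈ N.activeSet A ∅ θ 0} = Set.univ := by
    ext θ; simp [activeSet, h]
  rw [this]; simp

lemma EX_zero_not_mem (N : InfoNetwork V) (A : Set V) (v : V) (h : v ∉ A) :
    N.EX A ∅ 0 v = 0 := by
  rw [EX]
  have : {θ : V → ℝ | v ∈ N.activeSet A ∅ θ 0} = ∅ := by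
    ext θ; simp [activeSet, h]
  rw [this]; simp

end InfoNetwork

section Extend
variable {V : Type*} [Fintype V] [DecidableEq V] (N : InfoNetwork V) (vstar : V) (n : ℕ)

@[simp] lemma extendNet_b_inl_inl (v u : V) :
    (extendNet N vstar n).b (Sum.inl v) (Sum.inl u) = N.b v u := rfl
@[simp] lemma extendNet_b_inl_inr (v : V) (m : Fin n) :
    (extendNet N vstar n).b (Sum.inl v) (Sum.inr m) = 0 := rfl
@[simp] lemma extendNet_b_inr_inl (m : Fin n) (u : V) :
    (extendNet N vstar n).b (Sum.inr m) (Sum.inl u) = if u = vstar then 1 else 0 := rfl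
@[simp] lemma extendNet_b_inr_inr (m m' : Fin n) :
    (extendNet N vstar n).b (Sum.inr m) (Sum.inr m') = 0 := rfl

lemma active_inl (A : Set V) (θ : V ⊕ Fin n → ℝ) :
    ∀ t (v : V), (Sum.inl v ∈ (extendNet N vstar n).activeSet (Sum.inl '' A) ∅ θ t ↔
      v ∈ N.activeSet A ∅ (θ ∘ Sum.inl) t) := by
  intro t
  induction t with
  | zero =>
    intro v
    simp [InfoNetwork.activeSet, Sum.inl.injEq]
  | succ t ih =>
    classical
    intro v
    simp only [InfoNetwork.activeSet, Set.mem_union, Set.mem_empty_iff_false, false_or,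
      Set.mem_setOf_eq, Set.notMem_empty, not_false_iff, true_and]
    have hsum : ∑ u, ((extendNet N vstar n).activeSet (Sum.inl '' A) ∅ θ t).indicator
        ((extendNet N vstar n).b (Sum.inl v)) u =
        ∑ u, (N.activeSet A ∅ (θ ∘ Sum.inl) t).indicator (N.b v) u := by
      rw [Fintype.sum_sum_type]
      have hz : ∀ m : Fin n, ((extendNet N vstar n).activeSet (Sum.inl '' A) ∅ θ t).indicator
          ((extendNet N vstar n).b (Sum.inl v)) (Sum.inr m) = 0 := by
        intro m
        rw [Set.indicator_apply, extendNet_b_inl_inr]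
        simp
      simp only [hz, Finset.sum_const_zero, add_zero]
      apply Finset.sum_congr rfl
      intro u _
      rw [Set.indicator_apply, Set.indicator_apply, extendNet_b_inl_inl]
      exact if_congr (ih u) rfl rfl
    rw [hsum]
    rfl

open Classical in
lemma active_inr (A : Set V) (θ : V ⊕ Fin n → ℝ) (t : ℕ) (m : Fin n) :
    Sum.inr m ∈ (extendNet N vstar n).activeSet (Sum.inl '' A) ∅ θ (t+1) ↔
      θ (Sum.inr m) ≤
        (if vstar ∈ N.activeSet A ∅ (θ ∘ Sum.inl) t then (1:ℝ) else 0) := by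
  classical
  simp only [InfoNetwork.activeSet, Set.mem_union, Set.mem_empty_iff_false, false_or,
    Set.mem_setOf_eq, Set.notMem_empty, not_false_iff, true_and]
  have hsum : ∑ u, ((extendNet N vstar n).activeSet (Sum.inl '' A) ∅ θ t).indicator
      ((extendNet N vstar n).b (Sum.inr m)) u =
      (if vstar ∈ N.activeSet A ∅ (θ ∘ Sum.inl) t then (1:ℝ) else 0) := by
    rw [Fintype.sum_sum_type]
    have hz : ∀ m' : Fin n, ((extendNet N vstar n).activeSet (Sum.inl '' A) ∅ θ t).indicator
        ((extendNet N vstar n).b (Sum.inr m)) (Sum.inr m') = 0 := by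
      intro m'
      rw [Set.indicator_apply, extendNet_b_inr_inr]
      simp
    simp only [hz, Finset.sum_const_zero, add_zero]
    have hterm : ∀ u : V, ((extendNet N vstar n).activeSet (Sum.inl '' A) ∅ θ t).indicator
        ((extendNet N vstar n).b (Sum.inr m)) (Sum.inl u) =
        if u = vstar then (if vstar ∈ N.activeSet A ∅ (θ ∘ Sum.inl) t then (1:ℝ) else 0) else 0 := by
      intro u
      rw [Set.indicator_apply, extendNet_b_inr_inl]
      by_cases hu : u = vstar
      · subst hu
        simp only [eq_self_iff_true, if_true]
        exact if_congr (active_inl N u n A θ t u) rfl rfl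
      · simp [hu]
    simp only [hterm]
    rw [Finset.sum_ite_eq' Finset.univ vstar]
    simp
  rw [hsum]

omit [DecidableEq V] in
lemma restrict_measure (S : Set (V → ℝ)) (hS : MeasurableSet S) :
    thresholdMeasure (V ⊕ Fin n) {θ | θ ∘ Sum.inl ∈ S} = thresholdMeasure V S := by
  have hmp := MeasureTheory.measurePreserving_sumPiEquivProdPi
    (X := fun _ : V ⊕ Fin n => ℝ) (fun _ => unifMeasure)
  have hpre : {θ : V ⊕ Fin n → ℝ | θ ∘ Sum.inl ∈ S} =
      (MeasurableEquiv.sumPiEquivProdPi (fun _ : V ⊕ Fin n => ℝ)) ⁻¹' (S ×ˢ Set.univ) := by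
    ext θ
    simp only [Set.mem_setOf_eq, Set.mem_preimage, Set.mem_prod, Set.mem_univ, and_true]
    rfl
  rw [thresholdMeasure, hpre, hmp.measure_preimage (hS.prod MeasurableSet.univ).nullMeasurableSet,
    Measure.prod_prod]
  have : (Measure.pi fun _ : Fin n => unifMeasure) Set.univ = 1 := measure_univ
  rw [this, mul_one]
  rfl

lemma EX_inl (A : Set V) (t : ℕ) (v : V) :
    (extendNet N vstar n).EX (Sum.inl '' A) ∅ t (Sum.inl v) = N.EX A ∅ t v := by
  rw [InfoNetwork.EX, InfoNetwork.EX]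
  congr 1
  have : {θ : V ⊕ Fin n → ℝ | Sum.inl v ∈ (extendNet N vstar n).activeSet (Sum.inl '' A) ∅ θ t} =
      {θ : V ⊕ Fin n → ℝ | θ ∘ Sum.inl ∈ {η : V → ℝ | v ∈ N.activeSet A ∅ η t}} := by
    ext θ
    simpa using active_inl N vstar n A θ t v
  rw [this, restrict_measure]
  exact N.measurableSet_mem_activeSet A ∅ t v
lemma EX_inr_zero (A : Set V) (m : Fin n) :
    (extendNet N vstar n).EX (Sum.inl '' A) ∅ 0 (Sum.inr m) = 0 := by
  rw [InfoNetwork.EX]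
  have : {θ : V ⊕ Fin n → ℝ | Sum.inr m ∈ (extendNet N vstar n).activeSet (Sum.inl '' A) ∅ θ 0}
      = ∅ := by
    ext θ; simp [InfoNetwork.activeSet]
  rw [this]; simp

lemma EX_inr (A : Set V) (t : ℕ) (m : Fin n) :
    (extendNet N vstar n).EX (Sum.inl '' A) ∅ (t+1) (Sum.inr m) = N.EX A ∅ t vstar := by
  classical
  rw [InfoNetwork.EX, InfoNetwork.EX]
  congr 1
  have hnull : thresholdMeasure (V ⊕ Fin n) {θ | θ (Sum.inr m) ∈ (Set.Ioo (0:ℝ) 1)ᶜ} = 0 := by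
    rw [thresholdMeasure_coord (V ⊕ Fin n) (Sum.inr m) ((Set.Ioo (0:ℝ) 1)ᶜ),
      unifMeasure, Measure.restrict_apply measurableSet_Ioo.compl]
    simp
  have hae : {θ : V ⊕ Fin n → ℝ |
        Sum.inr m ∈ (extendNet N vstar n).activeSet (Sum.inl '' A) ∅ θ (t+1)}
      =ᵐ[thresholdMeasure (V ⊕ Fin n)]
      {θ : V ⊕ Fin n → ℝ | θ ∘ Sum.inl ∈ {η : V → ℝ | vstar ∈ N.activeSet A ∅ η t}} := by
    rw [Filter.eventuallyEq_set, MeasureTheory.ae_iff]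
    refine measure_mono_null ?_ hnull
    intro θ hθ
    simp only [Set.mem_setOf_eq, Set.mem_compl_iff] at hθ ⊢
    by_contra hmem
    simp only [Set.not_notMem, Set.mem_Ioo] at hmem
    apply hθ
    rw [active_inr N vstar n A θ t m]
    by_cases h : vstar ∈ N.activeSet A ∅ (θ ∘ Sum.inl) t
    · simp only [Set.mem_setOf_eq, h, if_true, iff_true]
      exact le_of_lt hmem.2
    · simp only [Set.mem_setOf_eq, h, if_false, iff_false]
      exact not_le.mpr hmem.1
  rw [measure_congr hae, restrict_measure]
  exact N.measurableSet_mem_activeSet A ∅ t vstar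

lemma sigmaBar_extend (T : ℕ) (A : Set V) :
    (extendNet N vstar n).sigmaBar (T+1) (Sum.inl '' A) ∅ =
      (1 / ((T:ℝ)+1)) * ((∑ t ∈ Finset.Icc 1 (T+1), ∑ v, N.EX A ∅ t v)
        + n * (A.indicator (fun _ => (1:ℝ)) vstar
          + ∑ t ∈ Finset.Icc 1 T, N.EX A ∅ t vstar)) := by
  classical
  rw [InfoNetwork.sigmaBar]
  have hcast : ((T + 1 : ℕ) : ℝ) = (T:ℝ) + 1 := by push_cast; ring
  rw [hcast]
  congr 1
  have hinner : ∀ t ∈ Finset.Icc 1 (T+1),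
      ∑ x : V ⊕ Fin n, (extendNet N vstar n).EX (Sum.inl '' A) ∅ t x =
      (∑ v, N.EX A ∅ t v) + n * N.EX A ∅ (t-1) vstar := by
    intro t ht
    rw [Fintype.sum_sum_type]
    congr 1
    · exact Finset.sum_congr rfl fun v _ => EX_inl N vstar n A t v
    · obtain ⟨s, rfl⟩ : ∃ s, t = s + 1 := by
        refine ⟨t - 1, ?_⟩
        have := (Finset.mem_Icc.mp ht).1
        omega
      simp only [Nat.add_sub_cancel]
      rw [Finset.sum_congr rfl fun m _ => EX_inr N vstar n A s m]
      simp [mul_comm]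
  rw [Finset.sum_congr rfl hinner, Finset.sum_add_distrib]
  congr 1
  rw [← Finset.mul_sum]
  congr 1
  have hre : ∑ t ∈ Finset.Icc 1 (T+1), N.EX A ∅ (t-1) vstar =
      ∑ t ∈ Finset.Icc 0 T, N.EX A ∅ t vstar := by
    apply Finset.sum_nbij' (fun t => t - 1) (fun t => t + 1)
    · intro t ht; simp only [Finset.mem_Icc] at *; omega
    · intro t ht; simp only [Finset.mem_Icc] at *; omega
    · intro t ht; simp only [Finset.mem_Icc] at ht; omega
    · intro t ht; omega
    · intro t ht; rfl
  rw [hre]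
  have h0 : Finset.Icc 0 T = insert 0 (Finset.Icc 1 T) := by
    ext t; simp only [Finset.mem_Icc, Finset.mem_insert]; omega
  rw [h0, Finset.sum_insert (by simp)]
  congr 1
  by_cases h : vstar ∈ A
  · rw [Set.indicator_of_mem h]; exact N.EX_zero_mem A vstar h
  · rw [Set.indicator_of_notMem h]; exact N.EX_zero_not_mem A vstar h

end Extend

/-- if `A ↦ (1/T) ∑_{t=1}^T E[X^t_{v*}(A,∅)]` is not submodular on subsets of
`V \ {d}`, then for every sufficiently large number `n` of added nodes, the expected
influence of the extended network over the period `[1,T+1]` (with empty permanent set) is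
not submodular; the failure of submodularity is witnessed by subsets of `V \ {d}`. -/
theorem extendNet_influence_not_submodular {V : Type*} [Fintype V] [DecidableEq V]
    (N : InfoNetwork V) (T : ℕ) (hT : 1 ≤ T) (vstar : V) (hv : vstar ≠ N.d)
    (hns : ¬ SubmodularOn {x : V | x ≠ N.d}
      (fun A => (1 / (T : ℝ)) * ∑ t ∈ Finset.Icc 1 T, N.EX A ∅ t vstar)) :
    ∃ n₀ : ℕ, ∀ n : ℕ, n₀ ≤ n →
      ∃ (A B : Set V) (w : V), A ⊆ B ∧ B ⊆ {x : V | x ≠ N.d} ∧ w ≠ N.d ∧ w ∉ B ∧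
        (extendNet N vstar n).sigmaBar (T + 1) (Sum.inl '' (insert w B)) ∅ -
            (extendNet N vstar n).sigmaBar (T + 1) (Sum.inl '' B) ∅ >
          (extendNet N vstar n).sigmaBar (T + 1) (Sum.inl '' (insert w A)) ∅ -
            (extendNet N vstar n).sigmaBar (T + 1) (Sum.inl '' A) ∅ := by
  classical
  rw [SubmodularOn] at hns
  push_neg at hns
  obtain ⟨A, B, hAB, hBS, w, hwS, hwB, hlt⟩ := hns
  set f : Set V → ℝ := fun X => ∑ t ∈ Finset.Icc 1 T, N.EX X ∅ t vstar with hf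
  set G : Set V → ℝ := fun X => ∑ t ∈ Finset.Icc 1 (T+1), ∑ v, N.EX X ∅ t v with hG
  set g : Set V → ℝ := fun X => X.indicator (fun _ => (1:ℝ)) vstar with hgdef
  have hTpos : (0:ℝ) < T := by exact_mod_cast hT
  have hδ : 0 < (f (insert w B) - f B) - (f (insert w A) - f A) := by
    have h1 : (1/(T:ℝ)) * (f (insert w A) - f A) < (1/(T:ℝ)) * (f (insert w B) - f B) := by
      have := hlt
      simp only [mul_sub] at *
      linarith
    have := (mul_lt_mul_iff_right₀ (by positivity : (0:ℝ) < 1/(T:ℝ))).mp h1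
    linarith
  set δ : ℝ := (f (insert w B) - f B) - (f (insert w A) - f A) with hδdef
  set M : ℝ := ((T:ℝ)+1) * (Fintype.card V) with hM
  have hGbound : ∀ X : Set V, 0 ≤ G X ∧ G X ≤ M := by
    intro X
    constructor
    · apply Finset.sum_nonneg
      intro t _
      exact Finset.sum_nonneg fun v _ => N.EX_nonneg X ∅ t v
    · calc G X ≤ ∑ t ∈ Finset.Icc 1 (T+1), ∑ _v : V, (1:ℝ) := by
            apply Finset.sum_le_sum
            intro t _
            exact Finset.sum_le_sum fun v _ => N.EX_le_one X ∅ t v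
        _ = M := by
            simp [hM, Nat.card_Icc, mul_comm]
  have hg : g (insert w B) - g B = g (insert w A) - g A := by
    by_cases hwv : w = vstar
    · subst hwv
      have h1 : w ∉ A := fun h => hwB (hAB h)
      rw [hgdef]
      simp only
      rw [Set.indicator_of_mem (Set.mem_insert w B), Set.indicator_of_mem (Set.mem_insert w A),
        Set.indicator_of_notMem hwB, Set.indicator_of_notMem h1]
    · have h1 : ∀ X : Set V, vstar ∈ insert w X ↔ vstar ∈ X := by
        intro X
        simp [Set.mem_insert_iff, Ne.symm hwv, fun h : vstar = w => hwv h.symm]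
      rw [hgdef]
      simp only
      by_cases h2 : vstar ∈ B
      · rw [Set.indicator_of_mem ((h1 B).mpr h2), Set.indicator_of_mem h2]
        by_cases h3 : vstar ∈ A
        · rw [Set.indicator_of_mem ((h1 A).mpr h3), Set.indicator_of_mem h3]
        · rw [Set.indicator_of_notMem (fun hc => h3 ((h1 A).mp hc)),
            Set.indicator_of_notMem h3]
          norm_num
      · have h3 : vstar ∉ A := fun hc => h2 (hAB hc)
        rw [Set.indicator_of_notMem (fun hc => h2 ((h1 B).mp hc)),
          Set.indicator_of_notMem h2,
          Set.indicator_of_notMem (fun hc => h3 ((h1 A).mp hc)),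
          Set.indicator_of_notMem h3]
  obtain ⟨n₀, hn₀⟩ := exists_nat_gt ((2*M) / δ)
  refine ⟨n₀, fun n hn => ⟨A, B, w, hAB, hBS, hwS, hwB, ?_⟩⟩
  have hnn : (2*M) / δ < (n:ℝ) := lt_of_lt_of_le hn₀ (by exact_mod_cast hn)
  have hn' : 2*M < (n:ℝ) * δ := by
    rw [div_lt_iff₀ hδ] at hnn
    linarith
  rw [sigmaBar_extend N vstar n T (insert w B), sigmaBar_extend N vstar n T B,
    sigmaBar_extend N vstar n T (insert w A), sigmaBar_extend N vstar n T A]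
  rw [gt_iff_lt, ← mul_sub, ← mul_sub, mul_lt_mul_iff_right₀ (by positivity : (0:ℝ) < 1/((T:ℝ)+1))]
  have key : (n:ℝ) * ((g (insert w B) + f (insert w B)) - (g B + f B)
      - ((g (insert w A) + f (insert w A)) - (g A + f A))) = (n:ℝ) * δ := by
    rw [hδdef]
    have := hg
    ring_nf
    nlinarith [hg]
  have hb1 := hGbound (insert w A)
  have hb2 := hGbound A
  have hb3 := hGbound (insert w B)
  have hb4 := hGbound B
  have hfX : ∀ X : Set V, ∑ t ∈ Finset.Icc 1 T, N.EX X ∅ t vstar = f X := fun X => rfl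
  have hGX : ∀ X : Set V, ∑ t ∈ Finset.Icc 1 (T+1), ∑ v, N.EX X ∅ t v = G X := fun X => rfl
  have hgX : ∀ X : Set V, X.indicator (fun _ => (1:ℝ)) vstar = g X := fun X => rfl
  simp only [hfX, hGX, hgX]
  nlinarith [key, hn', hb1.1, hb1.2, hb2.1, hb2.2, hb3.1, hb3.2, hb4.1, hb4.2]
end

section
/- There exist an information network (V,d,b) whose directed graph on V\{d} (with an edge from v to u whenever b v u > 0) contains a directed cycle, and a time horizon T ≥ 1, such that the expected influence A ↦ σ̄(A,∅) over the period [1,T], as a set function on subsets of V\{d}, is not submodular. -/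
open MeasureTheory

/-! ### Auxiliary constructions for the counterexample -/

/-- The weight matrix of the counterexample network. -/
noncomputable def myb : Fin 4 → Fin 4 → ℝ := fun v u =>
  if v = 0 then (if u = 0 then 1 else 0)
  else if v = 1 then (if u = 3 then 1 else 0)
  else if v = 2 then (if u = 2 then 1/2 else if u = 3 then 1/2 else 0)
  else (if u = 1 then 1 else 0)

/-- The counterexample network: void node `0`, nodes `1,2,3`, edges
`1 → 3` (weight 1), `2 → 2` and `2 → 3` (weight 1/2 each), `3 → 1` (weight 1). -/
noncomputable def myN : InfoNetwork (Fin 4) where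
  d := 0
  b := myb
  b_nonneg := by intro v u; unfold myb; split_ifs <;> norm_num
  b_le_one := by intro v u; unfold myb; split_ifs <;> norm_num
  row_sum := by
    intro v; fin_cases v <;> rw [Fin.sum_univ_four] <;>
      simp (config := {decide := true}) [myb] <;> norm_num
  void_loop := by norm_num [myb]

instance inst_s2 : IsProbabilityMeasure unifMeasure := by
  constructor
  simp [unifMeasure, Real.volume_Ioo]

instance : IsProbabilityMeasure (thresholdMeasure (Fin 4)) := by
  unfold thresholdMeasure; infer_instance

/-- The a.e. event that all thresholds are in `(0,1)`. -/
def Gset : Set (Fin 4 → ℝ) := Set.pi Set.univ (fun _ => Set.Ioo 0 1)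

lemma hGcompl : thresholdMeasure (Fin 4) Gsetᶜ = 0 := by
  have h1 : thresholdMeasure (Fin 4) Gset = 1 := by
    rw [Gset, thresholdMeasure, Measure.pi_pi]
    simp [unifMeasure, Real.volume_Ioo]
  have hm : MeasurableSet Gset := MeasurableSet.univ_pi (fun _ => measurableSet_Ioo)
  rw [measure_compl hm (by simp), h1]
  simp

lemma hH : thresholdMeasure (Fin 4) {θ : Fin 4 → ℝ | θ 2 ≤ 1/2} = ENNReal.ofReal (1/2) := by
  have heq : {θ : Fin 4 → ℝ | θ 2 ≤ 1/2}
      = Set.pi Set.univ (fun i => if i = 2 then Set.Iic (1/2) else Set.univ) := by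
    ext θ
    simp only [Set.mem_setOf_eq, Set.mem_univ_pi]
    constructor
    · intro h i
      by_cases hi : i = 2
      · subst hi; simpa using h
      · simp [hi]
    · intro h; simpa using h 2
  rw [heq, thresholdMeasure, Measure.pi_pi, Fin.prod_univ_four]
  have h2 : unifMeasure (Set.Iic (1/2 : ℝ)) = ENNReal.ofReal (1/2) := by
    rw [unifMeasure, Measure.restrict_apply measurableSet_Iic]
    have : Set.Iic (1/2:ℝ) ∩ Set.Ioo 0 1 = Set.Ioc 0 (1/2) := by
      ext x; simp only [Set.mem_inter_iff, Set.mem_Iic, Set.mem_Ioo, Set.mem_Ioc]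
      constructor
      · rintro ⟨h1, h2, h3⟩; exact ⟨h2, h1⟩
      · rintro ⟨h1, h2⟩; exact ⟨h2, h1, by linarith⟩
    rw [this, Real.volume_Ioc]; norm_num
  simp only [show (0:Fin 4) ≠ 2 by decide, show (1:Fin 4) ≠ 2 by decide,
    show (3:Fin 4) ≠ 2 by decide, if_neg, if_pos rfl, reduceIte, measure_univ, h2]
  ring

lemma meas_eq_of_eqOn {α : Type*} [MeasurableSpace α] {μ : Measure α} {E F S : Set α}
    (hS : μ Sᶜ = 0) (h : ∀ x ∈ S, x ∈ E ↔ x ∈ F) : μ E = μ F := by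
  apply measure_congr
  rw [Filter.eventuallyEq_set]
  have hae : ∀ᵐ x ∂μ, x ∈ S := by
    rw [MeasureTheory.ae_iff]
    exact hS
  exact hae.mono h

lemma mem_Gset {θ : Fin 4 → ℝ} (h : θ ∈ Gset) : ∀ i, θ i ∈ Set.Ioo (0:ℝ) 1 := by
  intro i; exact h i (Set.mem_univ i)

/-! EX evaluation helpers -/

lemma EX_eq_zero {A : Set (Fin 4)} {t : ℕ} {v : Fin 4}
    (h : ∀ θ : Fin 4 → ℝ, (∀ i, θ i ∈ Set.Ioo (0:ℝ) 1) → v ∉ myN.activeSet A ∅ θ t) :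
    myN.EX A ∅ t v = 0 := by
  unfold InfoNetwork.EX
  rw [meas_eq_of_eqOn hGcompl (F := (∅ : Set (Fin 4 → ℝ)))
    (fun θ hθ => by simpa using h θ (mem_Gset hθ))]
  simp

lemma EX_eq_one {A : Set (Fin 4)} {t : ℕ} {v : Fin 4}
    (h : ∀ θ : Fin 4 → ℝ, (∀ i, θ i ∈ Set.Ioo (0:ℝ) 1) → v ∈ myN.activeSet A ∅ θ t) :
    myN.EX A ∅ t v = 1 := by
  unfold InfoNetwork.EX
  rw [meas_eq_of_eqOn hGcompl (F := (Set.univ : Set (Fin 4 → ℝ)))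
    (fun θ hθ => by simpa using h θ (mem_Gset hθ))]
  simp

lemma EX_eq_half {A : Set (Fin 4)} {t : ℕ} {v : Fin 4}
    (h : ∀ θ : Fin 4 → ℝ, (∀ i, θ i ∈ Set.Ioo (0:ℝ) 1) →
      (v ∈ myN.activeSet A ∅ θ t ↔ θ 2 ≤ 1/2)) :
    myN.EX A ∅ t v = 1/2 := by
  unfold InfoNetwork.EX
  rw [meas_eq_of_eqOn hGcompl (F := {θ : Fin 4 → ℝ | θ 2 ≤ 1/2})
    (fun θ hθ => by simpa using h θ (mem_Gset hθ))]
  rw [hH, ENNReal.toReal_ofReal (by norm_num)]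

/-! Characterization of the active sets for the four relevant initial sets. -/

lemma mem_succ (A : Set (Fin 4)) (θ : Fin 4 → ℝ) (t : ℕ) (v : Fin 4) :
    v ∈ myN.activeSet A ∅ θ (t+1) ↔
      θ v ≤ ∑ u, (myN.activeSet A ∅ θ t).indicator (myN.b v) u := by
  simp [InfoNetwork.activeSet]

lemma act0 (A : Set (Fin 4)) (θ : Fin 4 → ℝ) : myN.activeSet A ∅ θ 0 = A := by
  simp [InfoNetwork.activeSet]

section Dynamics
variable {θ : Fin 4 → ℝ}

-- A = {1}
lemma a1 (hθ : ∀ i, θ i ∈ Set.Ioo (0:ℝ) 1) : myN.activeSet {1} ∅ θ 1 = {3} := by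
  ext v
  rw [mem_succ, act0, Fin.sum_univ_four]
  fin_cases v <;> simp (config := {decide := true}) [Set.indicator_apply, myN, myb]
  · exact (hθ 0).1
  · exact (hθ 1).1
  · exact (hθ 2).1
  · exact (hθ 3).2.le

lemma a2s (hθ : ∀ i, θ i ∈ Set.Ioo (0:ℝ) 1) (hs : θ 2 ≤ 1/2) : myN.activeSet {1} ∅ θ 2 = {1, 2} := by
  ext v
  rw [show (2:ℕ) = 1 + 1 from rfl, mem_succ, a1 hθ, Fin.sum_univ_four]
  fin_cases v <;> simp (config := {decide := true}) [Set.indicator_apply, myN, myb]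
  · exact (hθ 0).1
  · exact (hθ 1).2.le
  · linarith
  · exact (hθ 3).1

lemma a2n (hθ : ∀ i, θ i ∈ Set.Ioo (0:ℝ) 1) (hs : ¬ θ 2 ≤ 1/2) : myN.activeSet {1} ∅ θ 2 = {1} := by
  ext v
  rw [show (2:ℕ) = 1 + 1 from rfl, mem_succ, a1 hθ, Fin.sum_univ_four]
  fin_cases v <;> simp (config := {decide := true}) [Set.indicator_apply, myN, myb]
  · exact (hθ 0).1
  · exact (hθ 1).2.le
  · linarith [not_le.1 hs]
  · exact (hθ 3).1

-- A = {1,2}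
lemma b1s (hθ : ∀ i, θ i ∈ Set.Ioo (0:ℝ) 1) (hs : θ 2 ≤ 1/2) : myN.activeSet {1, 2} ∅ θ 1 = {2, 3} := by
  ext v
  rw [mem_succ, act0, Fin.sum_univ_four]
  fin_cases v <;> simp (config := {decide := true}) [Set.indicator_apply, myN, myb]
  · exact (hθ 0).1
  · exact (hθ 1).1
  · linarith
  · exact (hθ 3).2.le

lemma b1n (hθ : ∀ i, θ i ∈ Set.Ioo (0:ℝ) 1) (hs : ¬ θ 2 ≤ 1/2) : myN.activeSet {1, 2} ∅ θ 1 = {3} := by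
  ext v
  rw [mem_succ, act0, Fin.sum_univ_four]
  fin_cases v <;> simp (config := {decide := true}) [Set.indicator_apply, myN, myb]
  · exact (hθ 0).1
  · exact (hθ 1).1
  · linarith [not_le.1 hs]
  · exact (hθ 3).2.le

lemma b2s (hθ : ∀ i, θ i ∈ Set.Ioo (0:ℝ) 1) (hs : θ 2 ≤ 1/2) : myN.activeSet {1, 2} ∅ θ 2 = {1, 2} := by
  ext v
  rw [show (2:ℕ) = 1 + 1 from rfl, mem_succ, b1s hθ hs, Fin.sum_univ_four]
  fin_cases v <;> simp (config := {decide := true}) [Set.indicator_apply, myN, myb]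
  · exact (hθ 0).1
  · exact (hθ 1).2.le
  · linarith [(hθ 2).2]
  · exact (hθ 3).1

lemma b2n (hθ : ∀ i, θ i ∈ Set.Ioo (0:ℝ) 1) (hs : ¬ θ 2 ≤ 1/2) : myN.activeSet {1, 2} ∅ θ 2 = {1} := by
  ext v
  rw [show (2:ℕ) = 1 + 1 from rfl, mem_succ, b1n hθ hs, Fin.sum_univ_four]
  fin_cases v <;> simp (config := {decide := true}) [Set.indicator_apply, myN, myb]
  · exact (hθ 0).1
  · exact (hθ 1).2.le
  · linarith [not_le.1 hs]
  · exact (hθ 3).1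

-- A = {1,3}
lemma c1s (hθ : ∀ i, θ i ∈ Set.Ioo (0:ℝ) 1) (hs : θ 2 ≤ 1/2) : myN.activeSet {1, 3} ∅ θ 1 = {1, 2, 3} := by
  ext v
  rw [mem_succ, act0, Fin.sum_univ_four]
  fin_cases v <;> simp (config := {decide := true}) [Set.indicator_apply, myN, myb]
  · exact (hθ 0).1
  · exact (hθ 1).2.le
  · linarith
  · exact (hθ 3).2.le

lemma c1n (hθ : ∀ i, θ i ∈ Set.Ioo (0:ℝ) 1) (hs : ¬ θ 2 ≤ 1/2) : myN.activeSet {1, 3} ∅ θ 1 = {1, 3} := by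
  ext v
  rw [mem_succ, act0, Fin.sum_univ_four]
  fin_cases v <;> simp (config := {decide := true}) [Set.indicator_apply, myN, myb]
  · exact (hθ 0).1
  · exact (hθ 1).2.le
  · linarith [not_le.1 hs]
  · exact (hθ 3).2.le

lemma c2s (hθ : ∀ i, θ i ∈ Set.Ioo (0:ℝ) 1) (hs : θ 2 ≤ 1/2) : myN.activeSet {1, 3} ∅ θ 2 = {1, 2, 3} := by
  ext v
  rw [show (2:ℕ) = 1 + 1 from rfl, mem_succ, c1s hθ hs, Fin.sum_univ_four]
  fin_cases v <;> simp (config := {decide := true}) [Set.indicator_apply, myN, myb]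
  · exact (hθ 0).1
  · exact (hθ 1).2.le
  · linarith [(hθ 2).2]
  · exact (hθ 3).2.le

lemma c2n (hθ : ∀ i, θ i ∈ Set.Ioo (0:ℝ) 1) (hs : ¬ θ 2 ≤ 1/2) : myN.activeSet {1, 3} ∅ θ 2 = {1, 3} := by
  ext v
  rw [show (2:ℕ) = 1 + 1 from rfl, mem_succ, c1n hθ hs, Fin.sum_univ_four]
  fin_cases v <;> simp (config := {decide := true}) [Set.indicator_apply, myN, myb]
  · exact (hθ 0).1
  · exact (hθ 1).2.le
  · linarith [not_le.1 hs]
  · exact (hθ 3).2.le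

-- A = {1,2,3}
lemma d1 (hθ : ∀ i, θ i ∈ Set.Ioo (0:ℝ) 1) : myN.activeSet {1, 2, 3} ∅ θ 1 = {1, 2, 3} := by
  ext v
  rw [mem_succ, act0, Fin.sum_univ_four]
  fin_cases v <;> simp (config := {decide := true}) [Set.indicator_apply, myN, myb]
  · exact (hθ 0).1
  · exact (hθ 1).2.le
  · linarith [(hθ 2).2]
  · exact (hθ 3).2.le

lemma d2 (hθ : ∀ i, θ i ∈ Set.Ioo (0:ℝ) 1) : myN.activeSet {1, 2, 3} ∅ θ 2 = {1, 2, 3} := by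
  ext v
  rw [show (2:ℕ) = 1 + 1 from rfl, mem_succ, d1 hθ, Fin.sum_univ_four]
  fin_cases v <;> simp (config := {decide := true}) [Set.indicator_apply, myN, myb]
  · exact (hθ 0).1
  · exact (hθ 1).2.le
  · linarith [(hθ 2).2]
  · exact (hθ 3).2.le

end Dynamics

/-! sigmaBar values -/

lemma Icc12 : Finset.Icc 1 2 = ({1, 2} : Finset ℕ) := by decide

lemma sigmaBar2 (A : Set (Fin 4)) :
    myN.sigmaBar 2 A ∅ = (1/2) * ((∑ v, myN.EX A ∅ 1 v) + (∑ v, myN.EX A ∅ 2 v)) := by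
  rw [InfoNetwork.sigmaBar, Icc12]
  norm_num [Finset.sum_insert, Finset.sum_singleton]

lemma g1 : myN.sigmaBar 2 {1} ∅ = 5/4 := by
  rw [sigmaBar2, Fin.sum_univ_four, Fin.sum_univ_four]
  rw [EX_eq_zero (fun θ hθ => by rw [a1 hθ]; decide),
      EX_eq_zero (fun θ hθ => by rw [a1 hθ]; decide),
      EX_eq_zero (fun θ hθ => by rw [a1 hθ]; decide),
      EX_eq_one (fun θ hθ => by rw [a1 hθ]; decide)]
  rw [EX_eq_zero (v := 0) (t := 2) (fun θ hθ => by
        by_cases hs : θ 2 ≤ 1/2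
        · rw [a2s hθ hs]; decide
        · rw [a2n hθ hs]; decide),
      EX_eq_one (v := 1) (t := 2) (fun θ hθ => by
        by_cases hs : θ 2 ≤ 1/2
        · rw [a2s hθ hs]; decide
        · rw [a2n hθ hs]; decide),
      EX_eq_half (v := 2) (t := 2) (fun θ hθ => by
        by_cases hs : θ 2 ≤ 1/2
        · rw [a2s hθ hs]; simpa using hs
        · rw [a2n hθ hs]; simpa using hs),
      EX_eq_zero (v := 3) (t := 2) (fun θ hθ => by
        by_cases hs : θ 2 ≤ 1/2
        · rw [a2s hθ hs]; decide
        · rw [a2n hθ hs]; decide)]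
  norm_num

lemma g12 : myN.sigmaBar 2 {1, 2} ∅ = 3/2 := by
  rw [sigmaBar2, Fin.sum_univ_four, Fin.sum_univ_four]
  rw [EX_eq_zero (v := 0) (t := 1) (fun θ hθ => by
        by_cases hs : θ 2 ≤ 1/2
        · rw [b1s hθ hs]; decide
        · rw [b1n hθ hs]; decide),
      EX_eq_zero (v := 1) (t := 1) (fun θ hθ => by
        by_cases hs : θ 2 ≤ 1/2
        · rw [b1s hθ hs]; decide
        · rw [b1n hθ hs]; decide),
      EX_eq_half (v := 2) (t := 1) (fun θ hθ => by
        by_cases hs : θ 2 ≤ 1/2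
        · rw [b1s hθ hs]; simpa using hs
        · rw [b1n hθ hs]; simpa using hs),
      EX_eq_one (v := 3) (t := 1) (fun θ hθ => by
        by_cases hs : θ 2 ≤ 1/2
        · rw [b1s hθ hs]; decide
        · rw [b1n hθ hs]; decide)]
  rw [EX_eq_zero (v := 0) (t := 2) (fun θ hθ => by
        by_cases hs : θ 2 ≤ 1/2
        · rw [b2s hθ hs]; decide
        · rw [b2n hθ hs]; decide),
      EX_eq_one (v := 1) (t := 2) (fun θ hθ => by
        by_cases hs : θ 2 ≤ 1/2
        · rw [b2s hθ hs]; decide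
        · rw [b2n hθ hs]; decide),
      EX_eq_half (v := 2) (t := 2) (fun θ hθ => by
        by_cases hs : θ 2 ≤ 1/2
        · rw [b2s hθ hs]; simpa using hs
        · rw [b2n hθ hs]; simpa using hs),
      EX_eq_zero (v := 3) (t := 2) (fun θ hθ => by
        by_cases hs : θ 2 ≤ 1/2
        · rw [b2s hθ hs]; decide
        · rw [b2n hθ hs]; decide)]
  norm_num

lemma g13 : myN.sigmaBar 2 {1, 3} ∅ = 5/2 := by
  rw [sigmaBar2, Fin.sum_univ_four, Fin.sum_univ_four]
  rw [EX_eq_zero (v := 0) (t := 1) (fun θ hθ => by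
        by_cases hs : θ 2 ≤ 1/2
        · rw [c1s hθ hs]; decide
        · rw [c1n hθ hs]; decide),
      EX_eq_one (v := 1) (t := 1) (fun θ hθ => by
        by_cases hs : θ 2 ≤ 1/2
        · rw [c1s hθ hs]; decide
        · rw [c1n hθ hs]; decide),
      EX_eq_half (v := 2) (t := 1) (fun θ hθ => by
        by_cases hs : θ 2 ≤ 1/2
        · rw [c1s hθ hs]; simpa using hs
        · rw [c1n hθ hs]; simpa using hs),
      EX_eq_one (v := 3) (t := 1) (fun θ hθ => by
        by_cases hs : θ 2 ≤ 1/2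
        · rw [c1s hθ hs]; decide
        · rw [c1n hθ hs]; decide)]
  rw [EX_eq_zero (v := 0) (t := 2) (fun θ hθ => by
        by_cases hs : θ 2 ≤ 1/2
        · rw [c2s hθ hs]; decide
        · rw [c2n hθ hs]; decide),
      EX_eq_one (v := 1) (t := 2) (fun θ hθ => by
        by_cases hs : θ 2 ≤ 1/2
        · rw [c2s hθ hs]; decide
        · rw [c2n hθ hs]; decide),
      EX_eq_half (v := 2) (t := 2) (fun θ hθ => by
        by_cases hs : θ 2 ≤ 1/2
        · rw [c2s hθ hs]; simpa using hs
        · rw [c2n hθ hs]; simpa using hs),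
      EX_eq_one (v := 3) (t := 2) (fun θ hθ => by
        by_cases hs : θ 2 ≤ 1/2
        · rw [c2s hθ hs]; decide
        · rw [c2n hθ hs]; decide)]
  norm_num

lemma g123 : myN.sigmaBar 2 {1, 2, 3} ∅ = 3 := by
  rw [sigmaBar2, Fin.sum_univ_four, Fin.sum_univ_four]
  rw [EX_eq_zero (v := 0) (t := 1) (fun θ hθ => by rw [d1 hθ]; decide),
      EX_eq_one (v := 1) (t := 1) (fun θ hθ => by rw [d1 hθ]; decide),
      EX_eq_one (v := 2) (t := 1) (fun θ hθ => by rw [d1 hθ]; decide),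
      EX_eq_one (v := 3) (t := 1) (fun θ hθ => by rw [d1 hθ]; decide)]
  rw [EX_eq_zero (v := 0) (t := 2) (fun θ hθ => by rw [d2 hθ]; decide),
      EX_eq_one (v := 1) (t := 2) (fun θ hθ => by rw [d2 hθ]; decide),
      EX_eq_one (v := 2) (t := 2) (fun θ hθ => by rw [d2 hθ]; decide),
      EX_eq_one (v := 3) (t := 2) (fun θ hθ => by rw [d2 hθ]; decide)]
  norm_num

/-- There exist an information network whose directed graph on `V \ {d}`
(with an edge `v → u` whenever `b v u > 0`) contains a directed cycle, and a time horizon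
`T ≥ 1`, such that the expected influence `A ↦ σ̄(A,∅)` over `[1,T]`, as a set function on
subsets of `V \ {d}`, is not submodular. -/
theorem exists_cyclic_network_influence_not_submodular :
    ∃ (n : ℕ) (N : InfoNetwork (Fin n)) (T : ℕ), 1 ≤ T ∧
      (∃ v : Fin n, Relation.TransGen N.edgeRel v v) ∧
      ¬ SubmodularOn {x : Fin n | x ≠ N.d} (fun A => N.sigmaBar T A ∅) := by
  refine ⟨4, myN, 2, by norm_num, ⟨1, ?_⟩, ?_⟩
  · have e13 : myN.edgeRel 1 3 := ⟨by decide, by decide, by simp (config := {decide := true}) [myN, myb]⟩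
    have e31 : myN.edgeRel 3 1 := ⟨by decide, by decide, by simp (config := {decide := true}) [myN, myb]⟩
    exact (Relation.TransGen.single e13).tail e31
  · intro h
    have h13 : insert (3 : Fin 4) ({1} : Set (Fin 4)) = {1, 3} := by
      ext x; simp [Set.mem_insert_iff]; tauto
    have h123 : insert (3 : Fin 4) ({1, 2} : Set (Fin 4)) = {1, 2, 3} := by
      ext x; simp [Set.mem_insert_iff]; tauto
    have := h {1} {1, 2} (by intro x hx; simp at hx; simp [hx])
      (by intro x hx; simp at hx; rcases hx with h | h <;> subst h <;> decide)
      3 (by decide) (by decide)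
    rw [h13, h123] at this
    simp only [g1, g12, g13, g123] at this
    norm_num at this
end

section
/- Let (V,d,b) be an acyclic information network, run the Path-Effect process for T steps with transient initial set A ⊆ V\{d}. Let v be a non-void node, let u ∈ V with b v u > 0, let 1 ≤ t ≤ T, and let W = Γ(v) = {u : b v u > 0}. Then for every Q ∈ {0,1}^{W×{1,…,T}}: Pr[{ω : P^t_v[t](ω) = u} ∩ {ω : Π_W(ω) = Q}] = b v u · Pr[{ω : Π_W(ω) = Q}]. -/
open MeasureTheory

open scoped Classical in
/-- Inverse-CDF selection: the first element `u` of `s` (in the linear order) at which the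
cumulative sum of the probabilities `p` reaches `x`; if there is none, a default value. -/
noncomputable def pick {V : Type*} [LinearOrder V] (s : Finset V) (p : V → ℝ) (x : ℝ)
    (dflt : V) : V :=
  if h : (s.filter fun u => x ≤ ∑ w ∈ s.filter (· ≤ u), p w).Nonempty
  then (s.filter fun u => x ≤ ∑ w ∈ s.filter (· ≤ u), p w).min' h
  else dflt

open scoped Classical in
/-- The influence paths `P^t_v` of the Path-Effect process: `pePath N T A θ ξ t v j` is the
entry `P^t_v[j]` (entries with `j > t` are junk, set to the void node).  Here `θ` are the
thresholds and `ξ (v, i)` is the auxiliary selection variable of node `v` for time `i + 1`. -/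
noncomputable def pePath {V : Type*} [Fintype V] [LinearOrder V] (N : InfoNetwork V)
    (T : ℕ) (A : Set V) (θ : V → ℝ) (ξ : V × Fin T → ℝ) : ℕ → V → ℕ → V
  | 0 => fun v j => if j = 0 then v else N.d
  | t+1 => fun v j =>
      let prev := pePath N T A θ ξ t
      let At : Finset V := Finset.univ.filter fun u => prev u 0 ∈ A
      let f : ℝ := ∑ u ∈ At, N.b v u
      let x : ℝ := if h : t < T then ξ (v, ⟨t, h⟩) else 0
      let u : V :=
        if θ v ≤ f then
          pick (Finset.univ.filter fun u => 0 < N.b v u ∧ u ∈ At) (fun w => N.b v w / f) x N.d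
        else
          pick (Finset.univ.filter fun u => 0 < N.b v u ∧ u ∉ At)
            (fun w => N.b v w / (1 - f)) x N.d
      if j = t + 1 then u else prev u j

/-- The probability measure of the Path-Effect process: product of uniform measures on
`(0,1)` for the thresholds `θ ∈ (0,1)^V` and for the auxiliary selection variables
`ξ ∈ (0,1)^{V×{1,…,T}}`. -/
noncomputable def peMeasure (V : Type*) [Fintype V] (T : ℕ) :
    MeasureTheory.Measure ((V → ℝ) × (V × Fin T → ℝ)) :=
  (MeasureTheory.Measure.pi fun _ : V => unifMeasure).prod
    (MeasureTheory.Measure.pi fun _ : V × Fin T => unifMeasure)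


namespace PEAux
open Set


instance : IsProbabilityMeasure unifMeasure := by
  constructor
  rw [unifMeasure, Measure.restrict_apply MeasurableSet.univ]
  simp [Real.volume_Ioo]

lemma unif_apply (s : Set ℝ) :
    unifMeasure s = volume (s ∩ Set.Ioo 0 1) := Measure.restrict_apply' measurableSet_Ioo

lemma unif_Iic {F : ℝ} (h0 : 0 ≤ F) (h1 : F ≤ 1) :
    unifMeasure (Set.Iic F) = ENNReal.ofReal F := by
  rw [unif_apply]
  apply le_antisymm
  · calc volume (Set.Iic F ∩ Set.Ioo 0 1) ≤ volume (Set.Ioc 0 F) := by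
          apply measure_mono; rintro x ⟨hx1, hx2, hx3⟩; exact ⟨hx2, hx1⟩
    _ = ENNReal.ofReal F := by rw [Real.volume_Ioc]; simp
  · calc ENNReal.ofReal F = volume (Set.Ioo 0 F) := by rw [Real.volume_Ioo]; simp
    _ ≤ volume (Set.Iic F ∩ Set.Ioo 0 1) := by
          apply measure_mono; rintro x ⟨hx1, hx2⟩
          exact ⟨le_of_lt hx2, hx1, lt_of_lt_of_le hx2 h1⟩

lemma unif_Ioi {F : ℝ} (h0 : 0 ≤ F) :
    unifMeasure (Set.Ioi F) = ENNReal.ofReal (1 - F) := by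
  rw [unif_apply]
  have : Set.Ioi F ∩ Set.Ioo 0 1 = Set.Ioo F 1 := by
    ext x; constructor
    · rintro ⟨h1, _, h3⟩; exact ⟨h1, h3⟩
    · rintro ⟨h1, h2⟩; exact ⟨h1, lt_of_le_of_lt h0 h1, h2⟩
  rw [this, Real.volume_Ioo]


open scoped Classical in
noncomputable def pick {V : Type*} [LinearOrder V] (s : Finset V) (p : V → ℝ) (x : ℝ)
    (dflt : V) : V :=
  if h : (s.filter fun u => x ≤ ∑ w ∈ s.filter (· ≤ u), p w).Nonempty
  then (s.filter fun u => x ≤ ∑ w ∈ s.filter (· ≤ u), p w).min' h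
  else dflt

open Classical

variable {V : Type*} [LinearOrder V]

/-- cumulative sums -/
noncomputable def cum (s : Finset V) (p : V → ℝ) (u : V) : ℝ :=
  ∑ w ∈ s.filter (· ≤ u), p w

lemma pick_mem {s : Finset V} {p : V → ℝ} {x : ℝ} {d : V} (hne : s.Nonempty)
    (hx : x ≤ ∑ w ∈ s, p w) : pick s p x d ∈ s := by
  classical
  have hM : s.max' hne ∈ s.filter fun u => x ≤ ∑ w ∈ s.filter (· ≤ u), p w := by
    rw [Finset.mem_filter]
    refine ⟨s.max'_mem hne, ?_⟩
    rwa [Finset.filter_true_of_mem (fun w hw => Finset.le_max' s w hw)]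
  have h : (s.filter fun u => x ≤ ∑ w ∈ s.filter (· ≤ u), p w).Nonempty := ⟨_, hM⟩
  rw [pick, dif_pos h]
  exact Finset.mem_of_mem_filter _ (Finset.min'_mem _ h)

lemma pick_eq_iff {s : Finset V} {p : V → ℝ} {x : ℝ} {d u : V}
    (hp : ∀ w ∈ s, 0 ≤ p w) (hsum : ∑ w ∈ s, p w = 1) (hu : u ∈ s)
    (hx0 : 0 < x) (hx1 : x < 1) :
    pick s p x d = u ↔ (∑ w ∈ s.filter (· < u), p w < x ∧ x ≤ cum s p u) := by
  classical
  have hne : s.Nonempty := ⟨u, hu⟩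
  set F := s.filter fun u' => x ≤ ∑ w ∈ s.filter (· ≤ u'), p w with hF
  have hFne : F.Nonempty := by
    refine ⟨s.max' hne, ?_⟩
    rw [hF, Finset.mem_filter]
    refine ⟨s.max'_mem hne, ?_⟩
    rw [Finset.filter_true_of_mem (fun w hw => Finset.le_max' s w hw), hsum]
    exact le_of_lt hx1
  have hpick : pick s p x d = F.min' hFne := by rw [pick, dif_pos hFne]
  constructor
  · rintro rfl
    have humem : pick s p x d ∈ F := hpick ▸ F.min'_mem hFne
    have hcu : x ≤ cum s p (pick s p x d) := (Finset.mem_filter.mp humem).2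
    refine ⟨?_, hcu⟩
    by_cases hlt : (s.filter (· < pick s p x d)).Nonempty
    · set m := (s.filter (· < pick s p x d)).max' hlt with hm
      have hmmem := Finset.mem_filter.mp ((s.filter (· < pick s p x d)).max'_mem hlt)
      have hmnF : m ∉ F := by
        intro hmF
        have := Finset.min'_le F m hmF
        rw [← hpick] at this
        exact absurd hmmem.2 (not_lt.mpr this)
      have hcm : ¬ x ≤ cum s p m := by
        intro hc
        exact hmnF (Finset.mem_filter.mpr ⟨hmmem.1, hc⟩)
      have hle : ∑ w ∈ s.filter (· < pick s p x d), p w ≤ cum s p m := by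
        apply Finset.sum_le_sum_of_subset_of_nonneg
        · intro w hw
          have hw' := Finset.mem_filter.mp hw
          exact Finset.mem_filter.mpr ⟨hw'.1, Finset.le_max' _ w hw⟩
        · intro w hw _; exact hp w (Finset.mem_of_mem_filter _ hw)
      linarith [not_le.mp hcm]
    · rw [Finset.not_nonempty_iff_eq_empty] at hlt
      rw [hlt, Finset.sum_empty]; exact hx0
  · rintro ⟨hL, hC⟩
    have huF : u ∈ F := Finset.mem_filter.mpr ⟨hu, hC⟩
    rw [hpick]
    apply le_antisymm (Finset.min'_le F u huF)
    by_contra hcon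
    push_neg at hcon
    have hmF := Finset.mem_filter.mp (F.min'_mem hFne)
    have : cum s p (F.min' hFne) ≤ ∑ w ∈ s.filter (· < u), p w := by
      apply Finset.sum_le_sum_of_subset_of_nonneg
      · intro w hw
        have hw' := Finset.mem_filter.mp hw
        exact Finset.mem_filter.mpr ⟨hw'.1, lt_of_le_of_lt hw'.2 hcon⟩
      · intro w hw _; exact hp w (Finset.mem_of_mem_filter _ hw)
    have := hmF.2
    rw [cum] at *
    linarith

lemma measure_pick_eq_of_mem {s : Finset V} {p : V → ℝ} {d u : V}
    (hp : ∀ w ∈ s, 0 ≤ p w) (hsum : ∑ w ∈ s, p w = 1) (hu : u ∈ s) :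
    unifMeasure {x | pick s p x d = u} = ENNReal.ofReal (p u) := by
  classical
  set L := ∑ w ∈ s.filter (· < u), p w with hLdef
  set C := cum s p u with hCdef
  have hL0 : 0 ≤ L := Finset.sum_nonneg fun w hw => hp w (Finset.mem_of_mem_filter _ hw)
  have hC1 : C ≤ 1 := by
    rw [hCdef, cum, ← hsum]
    apply Finset.sum_le_sum_of_subset_of_nonneg (Finset.filter_subset _ _)
    intro w hw _; exact hp w hw
  have hCL : C - L = p u := by
    have hins : s.filter (· ≤ u) = insert u (s.filter (· < u)) := by
      ext w
      simp only [Finset.mem_filter, Finset.mem_insert]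
      constructor
      · rintro ⟨hws, hwu⟩
        rcases lt_or_eq_of_le hwu with h | h
        · exact Or.inr ⟨hws, h⟩
        · exact Or.inl h
      · rintro (rfl | ⟨hws, hwu⟩)
        · exact ⟨hu, le_refl _⟩
        · exact ⟨hws, le_of_lt hwu⟩
    have hnm : u ∉ s.filter (· < u) := by simp
    rw [hCdef, cum, hins, Finset.sum_insert hnm]; ring
  have hseteq : {x | pick s p x d = u} ∩ Set.Ioo 0 1 = Set.Ioc L C ∩ Set.Ioo 0 1 := by
    ext x
    simp only [Set.mem_inter_iff, Set.mem_setOf_eq, Set.mem_Ioc, Set.mem_Ioo]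
    constructor
    · rintro ⟨hpk, hx0, hx1⟩
      have := (pick_eq_iff hp hsum hu hx0 hx1).mp hpk
      exact ⟨⟨this.1, this.2⟩, hx0, hx1⟩
    · rintro ⟨⟨h1, h2⟩, hx0, hx1⟩
      exact ⟨(pick_eq_iff hp hsum hu hx0 hx1).mpr ⟨h1, h2⟩, hx0, hx1⟩
  rw [unif_apply, hseteq]
  have hLC : L ≤ C := by linarith [hp u hu]
  apply le_antisymm
  · calc volume (Set.Ioc L C ∩ Set.Ioo 0 1) ≤ volume (Set.Ioc L C) :=
          measure_mono Set.inter_subset_left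
    _ = ENNReal.ofReal (p u) := by rw [Real.volume_Ioc, hCL]
  · calc ENNReal.ofReal (p u) = volume (Set.Ioo L C) := by rw [Real.volume_Ioo, hCL]
    _ ≤ volume (Set.Ioc L C ∩ Set.Ioo 0 1) := by
        apply measure_mono
        rintro x ⟨h1, h2⟩
        exact ⟨⟨h1, le_of_lt h2⟩, lt_of_le_of_lt hL0 h1, lt_of_lt_of_le h2 hC1⟩

lemma measure_pick_eq_of_not_mem {s : Finset V} {p : V → ℝ} {d u : V}
    (hsum : ∑ w ∈ s, p w = 1) (hu : u ∉ s) :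
    unifMeasure {x | pick s p x d = u} = 0 := by
  classical
  rw [unif_apply]
  convert measure_empty
  · ext x
    simp only [Set.mem_inter_iff, Set.mem_setOf_eq, Set.mem_Ioo, Set.mem_empty_iff_false,
      iff_false, not_and]
    rintro hpk hx0 hx1
    have hne : s.Nonempty := by
      rcases Finset.eq_empty_or_nonempty s with rfl | h
      · exact absurd hsum (by simp)
      · exact h
    exact hu (hpk ▸ pick_mem hne (hsum ▸ le_of_lt hx1))
  · infer_instance

lemma pick_eq_dite (s : Finset V) (p : V → ℝ) (x : ℝ) (d : V) :
    pick s p x d = (if h : (s.filter (fun w => x ≤ cum s p w)).Nonempty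
      then (s.filter (fun w => x ≤ cum s p w)).min' h else d) := rfl

lemma measurable_pick_eq (s : Finset V) (p : V → ℝ) (d u : V) :
    MeasurableSet {x : ℝ | pick s p x d = u} := by
  classical
  have hset : {x : ℝ | pick s p x d = u} =
      ⋃ t ∈ (s.powerset : Finset (Finset V)), ({x : ℝ | ∀ w ∈ s, (x ≤ cum s p w ↔ w ∈ t)} ∩
        {x : ℝ | (if h : t.Nonempty then t.min' h else d) = u}) := by
    ext x
    simp only [Set.mem_iUnion, Set.mem_inter_iff, Set.mem_setOf_eq, Finset.mem_powerset,
      exists_prop]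
    constructor
    · intro hpk
      refine ⟨s.filter (fun w => x ≤ cum s p w), Finset.filter_subset _ _, fun w hw => ?_, ?_⟩
      · simp [Finset.mem_filter, hw]
      · rw [← hpk, pick_eq_dite]
    · rintro ⟨t, hts, hiff, hval⟩
      have ht0 : s.filter (fun w => x ≤ cum s p w) = t := by
        ext w
        simp only [Finset.mem_filter]
        constructor
        · rintro ⟨hws, hc⟩; exact (hiff w hws).mp hc
        · intro hwt; exact ⟨hts hwt, (hiff w (hts hwt)).mpr hwt⟩
      rw [pick_eq_dite]
      simp only [ht0]
      exact hval
  rw [hset]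
  apply MeasurableSet.biUnion (Finset.countable_toSet _)
  intro t _
  apply MeasurableSet.inter
  · have : {x : ℝ | ∀ w ∈ s, (x ≤ cum s p w ↔ w ∈ t)} =
        ⋂ w ∈ (s : Finset V), {x : ℝ | x ≤ cum s p w ↔ w ∈ t} := by
      ext x; simp
    rw [this]
    apply MeasurableSet.biInter (Finset.countable_toSet _)
    intro w _
    by_cases hwt : w ∈ t
    · simp only [hwt, iff_true]
      exact measurableSet_Iic
    · simp only [hwt, iff_false]
      exact measurableSet_Iic.compl
  · by_cases hval : (if h : t.Nonempty then t.min' h else d) = u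
    · simp [hval]
    · simp [hval]

section Net
variable {V : Type*} [Fintype V]

open scoped Classical in
noncomputable def actF (N : InfoNetwork V) (A : Set V) (θ : V → ℝ) : ℕ → Finset V
  | 0 => Finset.univ.filter (· ∈ A)
  | s+1 => Finset.univ.filter (fun w => θ w ≤ ∑ u ∈ actF N A θ s, N.b w u)

variable {N : InfoNetwork V} {A : Set V}

lemma mem_actF_zero {θ : V → ℝ} {w : V} : w ∈ actF N A θ 0 ↔ w ∈ A := by
  classical
  simp [actF]

lemma mem_actF_succ {θ : V → ℝ} {w : V} {s : ℕ} :
    w ∈ actF N A θ (s+1) ↔ θ w ≤ ∑ u ∈ actF N A θ s, N.b w u := by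
  classical
  simp [actF]

open scoped Classical in
lemma sum_actF (θ : V → ℝ) (s : ℕ) (w : V) :
    ∑ u ∈ actF N A θ s, N.b w u = ∑ u : V, if u ∈ actF N A θ s then N.b w u else 0 := by
  classical
  rw [Finset.sum_ite_mem, Finset.univ_inter]

lemma measurableSet_mem_actF (N : InfoNetwork V) (A : Set V) :
    ∀ (s : ℕ) (w : V), MeasurableSet {θ : V → ℝ | w ∈ actF N A θ s} := by
  intro s
  induction s with
  | zero =>
    intro w
    by_cases hw : w ∈ A
    · simp only [mem_actF_zero, hw]; exact MeasurableSet.univ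
    · simp only [mem_actF_zero, hw]; simp
  | succ s ih =>
    intro w
    simp only [mem_actF_succ]
    apply measurableSet_le (measurable_pi_apply w)
    classical
    have : (fun θ : V → ℝ => ∑ u ∈ actF N A θ s, N.b w u) =
        fun θ => ∑ u : V, if u ∈ actF N A θ s then N.b w u else 0 := by
      funext θ; exact sum_actF θ s w
    rw [this]
    apply Finset.measurable_sum
    intro u _
    exact Measurable.ite (ih u) measurable_const measurable_const

lemma measurable_actF_sum (N : InfoNetwork V) (A : Set V) (s : ℕ) (w : V) :
    Measurable (fun θ : V → ℝ => ∑ u ∈ actF N A θ s, N.b w u) := by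
  classical
  have : (fun θ : V → ℝ => ∑ u ∈ actF N A θ s, N.b w u) =
      fun θ => ∑ u : V, if u ∈ actF N A θ s then N.b w u else 0 := by
    funext θ; exact sum_actF θ s w
  rw [this]
  apply Finset.measurable_sum
  intro u _
  exact Measurable.ite (measurableSet_mem_actF N A s u) measurable_const measurable_const

/-- Lemma C: changing the threshold at `v` does not affect membership in `actF` of
nodes that cannot reach `v`. -/
lemma actF_update_indep [DecidableEq V] (v : V) (θ : V → ℝ) (xv : ℝ) (s : ℕ) :
    ∀ w, ¬ Relation.ReflTransGen (fun a c : V => 0 < N.b a c) w v →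
      (w ∈ actF N A (Function.update θ v xv) s ↔ w ∈ actF N A θ s) := by
  induction s with
  | zero => intro w _; simp [mem_actF_zero]
  | succ s ih =>
    classical
    intro w hw
    have hwv : w ≠ v := fun h => hw (h ▸ Relation.ReflTransGen.refl)
    rw [mem_actF_succ, mem_actF_succ, Function.update_of_ne hwv]
    have hsum : ∑ u ∈ actF N A (Function.update θ v xv) s, N.b w u
        = ∑ u ∈ actF N A θ s, N.b w u := by
      rw [sum_actF, sum_actF]
      apply Finset.sum_congr rfl
      intro u _
      by_cases hbu : 0 < N.b w u
      · have hnu : ¬ Relation.ReflTransGen (fun a c : V => 0 < N.b a c) u v :=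
          fun h => hw (Relation.ReflTransGen.head hbu h)
        simp only [ih u hnu]
        congr!
      · have hzero : N.b w u = 0 := le_antisymm (not_lt.mp hbu) (N.b_nonneg w u)
        simp [hzero]
    rw [hsum]

lemma b_d_eq_zero (N : InfoNetwork V) {u : V} (hu : u ≠ N.d) : N.b N.d u = 0 := by
  classical
  have hs := N.row_sum N.d
  rw [← Finset.add_sum_erase Finset.univ (N.b N.d) (Finset.mem_univ N.d), N.void_loop] at hs
  have hzero : ∑ x ∈ Finset.univ.erase N.d, N.b N.d x = 0 := by linarith
  have := (Finset.sum_eq_zero_iff_of_nonneg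
    (fun x _ => N.b_nonneg N.d x)).mp hzero u (Finset.mem_erase.mpr ⟨hu, Finset.mem_univ u⟩)
  exact this

lemma reach_from_d (N : InfoNetwork V) {c : V}
    (h : Relation.ReflTransGen (fun a c : V => 0 < N.b a c) N.d c) : c = N.d := by
  induction h with
  | refl => rfl
  | tail _ hbc ih =>
    subst ih
    by_contra hc
    exact absurd hbc (by rw [b_d_eq_zero N hc]; exact lt_irrefl 0)

lemma rtg_toTransGen (N : InfoNetwork V) {a c : V}
    (h : Relation.ReflTransGen (fun a c : V => 0 < N.b a c) a c) (hc : c ≠ N.d) :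
    a = c ∨ (a ≠ N.d ∧ Relation.TransGen N.edgeRel a c) := by
  induction h with
  | refl => exact Or.inl rfl
  | @tail b c hab hbc ih =>
    have hbne : b ≠ N.d := by
      rintro rfl
      exact absurd hbc (by rw [b_d_eq_zero N hc]; exact lt_irrefl 0)
    rcases ih hbne with rfl | ⟨had, htg⟩
    · exact Or.inr ⟨hbne, Relation.TransGen.single ⟨hbne, hc, hbc⟩⟩
    · exact Or.inr ⟨had, Relation.TransGen.tail htg ⟨hbne, hc, hbc⟩⟩

lemma no_reach_back (N : InfoNetwork V) (hacyc : N.Acyclic) {v w : V} (hv : v ≠ N.d)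
    (hbw : 0 < N.b v w) :
    ¬ Relation.ReflTransGen (fun a c : V => 0 < N.b a c) w v := by
  intro h
  by_cases hwd : w = N.d
  · subst hwd
    exact hv (reach_from_d N h)
  · rcases rtg_toTransGen N h hv with rfl | ⟨_, htg⟩
    · exact hacyc w (Relation.TransGen.single ⟨hv, hv, hbw⟩)
    · exact hacyc v (Relation.TransGen.head ⟨hv, hwd, hbw⟩ htg)

end Net
section Path
variable {V : Type*} [Fintype V] [LinearOrder V]

open scoped Classical in
noncomputable def peSel (N : InfoNetwork V) (T : ℕ) (A : Set V) (θ : V → ℝ)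
    (ξ : V × Fin T → ℝ) (s : ℕ) (v : V) : V :=
  let At : Finset V := Finset.univ.filter fun u => pePath N T A θ ξ s u 0 ∈ A
  let f : ℝ := ∑ u ∈ At, N.b v u
  let x : ℝ := if h : s < T then ξ (v, ⟨s, h⟩) else 0
  if θ v ≤ f then
    pick (Finset.univ.filter fun u => 0 < N.b v u ∧ u ∈ At) (fun w => N.b v w / f) x N.d
  else
    pick (Finset.univ.filter fun u => 0 < N.b v u ∧ u ∉ At) (fun w => N.b v w / (1 - f)) x N.d

lemma pePath_succ (N : InfoNetwork V) (T : ℕ) (A : Set V) (θ : V → ℝ) (ξ : V × Fin T → ℝ)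
    (s : ℕ) (v : V) (j : ℕ) :
    pePath N T A θ ξ (s+1) v j =
      (if j = s + 1
       then peSel N T A θ ξ s v
       else pePath N T A θ ξ s (peSel N T A θ ξ s v) j) := rfl

lemma pePath_zero (N : InfoNetwork V) (T : ℕ) (A : Set V) (θ : V → ℝ) (ξ : V × Fin T → ℝ)
    (v : V) : pePath N T A θ ξ 0 v 0 = v := rfl

variable {N : InfoNetwork V} {A : Set V} {T : ℕ} {θ : V → ℝ} {ξ : V × Fin T → ℝ}

/-- Lemma A : correctness of `actF` along the PE process paths. -/
lemma pePath_mem_iff (hθ : ∀ w, θ w ∈ Set.Ioo (0:ℝ) 1) (hξ : ∀ p, ξ p ∈ Set.Ioo (0:ℝ) 1) :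
    ∀ s, s ≤ T → ∀ w, (pePath N T A θ ξ s w 0 ∈ A ↔ w ∈ actF N A θ s) := by
  classical
  intro s
  induction s with
  | zero =>
    intro _ w
    rw [pePath_zero, mem_actF_zero]
  | succ s ih =>
    intro hsT w
    have hsT' : s ≤ T := Nat.le_of_succ_le hsT
    have hsltT : s < T := hsT
    have hAt : (Finset.univ.filter fun u => pePath N T A θ ξ s u 0 ∈ A) = actF N A θ s := by
      ext u
      simp only [Finset.mem_filter, Finset.mem_univ, true_and]
      exact ih hsT' u
    rw [pePath_succ, if_neg (by omega), ih hsT', mem_actF_succ]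
    set f := ∑ u ∈ actF N A θ s, N.b w u with hf
    set x := ξ (w, ⟨s, hsltT⟩) with hx
    have hx0 : 0 < x := (hξ _).1
    have hx1 : x < 1 := (hξ _).2
    have hθw0 : 0 < θ w := (hθ w).1
    have hθw1 : θ w < 1 := (hθ w).2
    have hpeSel : peSel N T A θ ξ s w =
        (if θ w ≤ f then
          pick (Finset.univ.filter fun u => 0 < N.b w u ∧ u ∈ actF N A θ s)
            (fun u => N.b w u / f) x N.d
        else
          pick (Finset.univ.filter fun u => 0 < N.b w u ∧ u ∉ actF N A θ s)
            (fun u => N.b w u / (1 - f)) x N.d) := by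
      simp only [peSel, hAt, dif_pos hsltT]
      rfl
    by_cases hθf : θ w ≤ f
    · rw [hpeSel, if_pos hθf]
      have hf0 : 0 < f := lt_of_lt_of_le hθw0 hθf
      set s1 := Finset.univ.filter fun u => 0 < N.b w u ∧ u ∈ actF N A θ s with hs1
      have hbs : ∑ u ∈ s1, N.b w u = f := by
        apply Finset.sum_subset
        · intro y hy
          exact (Finset.mem_filter.mp hy).2.2
        · intro y hyS hyns1
          by_contra hne
          exact hyns1 (Finset.mem_filter.mpr ⟨Finset.mem_univ y,
            lt_of_le_of_ne (N.b_nonneg w y) (Ne.symm hne), hyS⟩)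
      have hpsum : ∑ u ∈ s1, N.b w u / f = 1 := by
        rw [← Finset.sum_div, hbs, div_self hf0.ne']
      have hne : s1.Nonempty := by
        rcases Finset.eq_empty_or_nonempty s1 with h | h
        · rw [h, Finset.sum_empty] at hbs; exact absurd hbs.symm hf0.ne'
        · exact h
      have hmem := pick_mem hne (le_of_lt (hpsum ▸ hx1)) (d := N.d)
      have : pick s1 (fun u => N.b w u / f) x N.d ∈ actF N A θ s :=
        (Finset.mem_filter.mp hmem).2.2
      exact iff_of_true this hθf
    · rw [hpeSel, if_neg hθf]
      have hf1 : 0 < 1 - f := by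
        push_neg at hθf
        linarith
      set s2 := Finset.univ.filter fun u => 0 < N.b w u ∧ u ∉ actF N A θ s with hs2
      have hsdiff : ∑ u ∈ Finset.univ \ actF N A θ s, N.b w u = 1 - f := by
        have h1 := Finset.sum_sdiff (f := N.b w) (Finset.subset_univ (actF N A θ s))
        have h2 := N.row_sum w
        rw [← hf] at h1
        linarith
      have hbs : ∑ u ∈ s2, N.b w u = 1 - f := by
        rw [← hsdiff]
        apply Finset.sum_subset
        · intro y hy
          have := Finset.mem_filter.mp hy
          exact Finset.mem_sdiff.mpr ⟨Finset.mem_univ y, this.2.2⟩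
        · intro y hyS hyns2
          by_contra hne
          exact hyns2 (Finset.mem_filter.mpr ⟨Finset.mem_univ y,
            lt_of_le_of_ne (N.b_nonneg w y) (Ne.symm hne), (Finset.mem_sdiff.mp hyS).2⟩)
      have hpsum : ∑ u ∈ s2, N.b w u / (1 - f) = 1 := by
        rw [← Finset.sum_div, hbs, div_self hf1.ne']
      have hne : s2.Nonempty := by
        rcases Finset.eq_empty_or_nonempty s2 with h | h
        · rw [h, Finset.sum_empty] at hbs; exact absurd hbs.symm (by linarith)
        · exact h
      have hmem := pick_mem hne (le_of_lt (hpsum ▸ hx1)) (d := N.d)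
      have : pick s2 (fun u => N.b w u / (1 - f)) x N.d ∉ actF N A θ s :=
        (Finset.mem_filter.mp hmem).2.2
      exact iff_of_false this hθf

open scoped Classical in
/-- the last entry of the path at time `τ+1`, in terms of `actF`. -/
lemma pePath_last (hθ : ∀ w, θ w ∈ Set.Ioo (0:ℝ) 1) (hξ : ∀ p, ξ p ∈ Set.Ioo (0:ℝ) 1)
    {τ : ℕ} (hτ : τ < T) (v : V) :
    pePath N T A θ ξ (τ+1) v (τ+1) =
      (if θ v ≤ (∑ u' ∈ actF N A θ τ, N.b v u')
       then pick (Finset.univ.filter fun w => 0 < N.b v w ∧ w ∈ actF N A θ τ)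
              (fun w => N.b v w / (∑ u' ∈ actF N A θ τ, N.b v u')) (ξ (v, ⟨τ, hτ⟩)) N.d
       else pick (Finset.univ.filter fun w => 0 < N.b v w ∧ w ∉ actF N A θ τ)
              (fun w => N.b v w / (1 - ∑ u' ∈ actF N A θ τ, N.b v u')) (ξ (v, ⟨τ, hτ⟩)) N.d) := by
  classical
  have hAt : (Finset.univ.filter fun u => pePath N T A θ ξ τ u 0 ∈ A) = actF N A θ τ := by
    ext u
    simp only [Finset.mem_filter, Finset.mem_univ, true_and]
    exact pePath_mem_iff hθ hξ τ (le_of_lt hτ) u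
  rw [pePath_succ, if_pos rfl]
  simp only [peSel, hAt, dif_pos hτ]

end Path
section Main
variable {V : Type*} [Fintype V] [LinearOrder V]

open scoped Classical in
/-- the selection made by `v` given the active set `s₀`, its own threshold `tv` and
auxiliary variable `x`. -/
noncomputable def pickAux (N : InfoNetwork V) (v : V) (s₀ : Finset V) (tv x : ℝ) : V :=
  if tv ≤ ∑ u' ∈ s₀, N.b v u'
  then pick (Finset.univ.filter fun w => 0 < N.b v w ∧ w ∈ s₀)
        (fun w => N.b v w / ∑ u' ∈ s₀, N.b v u') x N.d
  else pick (Finset.univ.filter fun w => 0 < N.b v w ∧ w ∉ s₀)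
        (fun w => N.b v w / (1 - ∑ u' ∈ s₀, N.b v u')) x N.d

variable {N : InfoNetwork V} {A : Set V} {T : ℕ} {θ : V → ℝ} {ξ : V × Fin T → ℝ}

lemma pePath_last' (hθ : ∀ w, θ w ∈ Set.Ioo (0:ℝ) 1) (hξ : ∀ p, ξ p ∈ Set.Ioo (0:ℝ) 1)
    {τ : ℕ} (hτ : τ < T) (v : V) :
    pePath N T A θ ξ (τ+1) v (τ+1) =
      pickAux N v (actF N A θ τ) (θ v) (ξ (v, ⟨τ, hτ⟩)) := by
  rw [pePath_last hθ hξ hτ v]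
  rfl

lemma sum_filter_mem (N : InfoNetwork V) (v : V) (s₀ : Finset V) :
    ∑ w ∈ Finset.univ.filter (fun w => 0 < N.b v w ∧ w ∈ s₀), N.b v w
      = ∑ u' ∈ s₀, N.b v u' := by
  classical
  apply Finset.sum_subset
  · intro y hy
    exact (Finset.mem_filter.mp hy).2.2
  · intro y hyS hyns
    by_contra hne
    exact hyns (Finset.mem_filter.mpr ⟨Finset.mem_univ y,
      lt_of_le_of_ne (N.b_nonneg v y) (Ne.symm hne), hyS⟩)

lemma sum_filter_not_mem (N : InfoNetwork V) (v : V) (s₀ : Finset V) :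
    ∑ w ∈ Finset.univ.filter (fun w => 0 < N.b v w ∧ w ∉ s₀), N.b v w
      = 1 - ∑ u' ∈ s₀, N.b v u' := by
  classical
  have hsdiff : ∑ u ∈ Finset.univ \ s₀, N.b v u = 1 - ∑ u' ∈ s₀, N.b v u' := by
    have h1 := Finset.sum_sdiff (f := N.b v) (Finset.subset_univ s₀)
    have h2 := N.row_sum v
    linarith
  rw [← hsdiff]
  apply Finset.sum_subset
  · intro y hy
    have := Finset.mem_filter.mp hy
    exact Finset.mem_sdiff.mpr ⟨Finset.mem_univ y, this.2.2⟩
  · intro y hyS hyns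
    by_contra hne
    exact hyns (Finset.mem_filter.mpr ⟨Finset.mem_univ y,
      lt_of_le_of_ne (N.b_nonneg v y) (Ne.symm hne), (Finset.mem_sdiff.mp hyS).2⟩)

lemma measurableSet_pickAux_x (N : InfoNetwork V) (v : V) (s₀ : Finset V) (tv : ℝ) (u : V) :
    MeasurableSet {x : ℝ | pickAux N v s₀ tv x = u} := by
  classical
  by_cases hb : tv ≤ ∑ u' ∈ s₀, N.b v u'
  · have hset : {x : ℝ | pickAux N v s₀ tv x = u}
        = {x : ℝ | pick (Finset.univ.filter fun w => 0 < N.b v w ∧ w ∈ s₀)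
            (fun w => N.b v w / ∑ u' ∈ s₀, N.b v u') x N.d = u} := by
      ext x; rw [Set.mem_setOf_eq, pickAux, if_pos hb, Set.mem_setOf_eq]
    rw [hset]; exact measurable_pick_eq _ _ _ _
  · have hset : {x : ℝ | pickAux N v s₀ tv x = u}
        = {x : ℝ | pick (Finset.univ.filter fun w => 0 < N.b v w ∧ w ∉ s₀)
            (fun w => N.b v w / (1 - ∑ u' ∈ s₀, N.b v u')) x N.d = u} := by
      ext x; rw [Set.mem_setOf_eq, pickAux, if_neg hb, Set.mem_setOf_eq]
    rw [hset]; exact measurable_pick_eq _ _ _ _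

open scoped Classical in
lemma unif_pickAux (N : InfoNetwork V) {v u : V} (hu : 0 < N.b v u) (s₀ : Finset V)
    {tv : ℝ} (htv : tv ∈ Set.Ioo (0:ℝ) 1) :
    unifMeasure {x | pickAux N v s₀ tv x = u} =
      (if u ∈ s₀
       then (if tv ≤ ∑ u' ∈ s₀, N.b v u'
             then ENNReal.ofReal (N.b v u / ∑ u' ∈ s₀, N.b v u') else 0)
       else (if tv ≤ ∑ u' ∈ s₀, N.b v u' then 0
             else ENNReal.ofReal (N.b v u / (1 - ∑ u' ∈ s₀, N.b v u')))) := by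
  classical
  set F₀ := ∑ u' ∈ s₀, N.b v u' with hF₀
  by_cases hb : tv ≤ F₀
  · have hF0 : 0 < F₀ := lt_of_lt_of_le htv.1 hb
    have hset : {x : ℝ | pickAux N v s₀ tv x = u}
        = {x : ℝ | pick (Finset.univ.filter fun w => 0 < N.b v w ∧ w ∈ s₀)
            (fun w => N.b v w / F₀) x N.d = u} := by
      ext x; rw [Set.mem_setOf_eq, pickAux, if_pos hb, Set.mem_setOf_eq]
    have hpsum : ∑ w ∈ Finset.univ.filter (fun w => 0 < N.b v w ∧ w ∈ s₀),
        N.b v w / F₀ = 1 := by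
      rw [← Finset.sum_div, sum_filter_mem, div_self hF0.ne']
    rw [hset]
    by_cases hus : u ∈ s₀
    · rw [if_pos hus, if_pos hb]
      exact measure_pick_eq_of_mem
        (fun w _ => div_nonneg (N.b_nonneg v w) (le_of_lt hF0)) hpsum
        (Finset.mem_filter.mpr ⟨Finset.mem_univ u, hu, hus⟩)
    · rw [if_neg hus, if_pos hb]
      apply measure_pick_eq_of_not_mem hpsum
      intro hmem
      exact hus (Finset.mem_filter.mp hmem).2.2
  · have hF1 : 0 < 1 - F₀ := by
      push_neg at hb
      linarith [htv.2]
    have hset : {x : ℝ | pickAux N v s₀ tv x = u}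
        = {x : ℝ | pick (Finset.univ.filter fun w => 0 < N.b v w ∧ w ∉ s₀)
            (fun w => N.b v w / (1 - F₀)) x N.d = u} := by
      ext x; rw [Set.mem_setOf_eq, pickAux, if_neg hb, Set.mem_setOf_eq]
    have hpsum : ∑ w ∈ Finset.univ.filter (fun w => 0 < N.b v w ∧ w ∉ s₀),
        N.b v w / (1 - F₀) = 1 := by
      rw [← Finset.sum_div, sum_filter_not_mem, div_self hF1.ne']
    rw [hset]
    by_cases hus : u ∈ s₀
    · rw [if_pos hus, if_neg hb]
      apply measure_pick_eq_of_not_mem hpsum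
      intro hmem
      exact (Finset.mem_filter.mp hmem).2.2 hus
    · rw [if_neg hus, if_neg hb]
      exact measure_pick_eq_of_mem
        (fun w _ => div_nonneg (N.b_nonneg v w) (le_of_lt hF1)) hpsum
        (Finset.mem_filter.mpr ⟨Finset.mem_univ u, hu, hus⟩)

lemma pi_eval_measure {ι : Type*} [Fintype ι] (i : ι) (S : Set ℝ) :
    (Measure.pi fun _ : ι => unifMeasure) ((fun g => g i) ⁻¹' S) = unifMeasure S := by
  classical
  rw [show ((fun g : ι → ℝ => g i) ⁻¹' S)
      = Set.pi Set.univ (Function.update (fun _ => Set.univ) i S) from Set.eval_preimage,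
    Measure.pi_pi]
  rw [Finset.prod_eq_single_of_mem i (Finset.mem_univ i)
    (fun j _ hj => by rw [Function.update_of_ne hj]; exact measure_univ)]
  rw [Function.update_self]

lemma ae_coord_good {ι : Type*} [Fintype ι] :
    ∀ᵐ g ∂(Measure.pi fun _ : ι => unifMeasure), ∀ i, g i ∈ Set.Ioo (0:ℝ) 1 := by
  rw [ae_iff]
  have hset : {g : ι → ℝ | ¬ ∀ i, g i ∈ Set.Ioo (0:ℝ) 1}
      = ⋃ i, (fun g : ι → ℝ => g i) ⁻¹' (Set.Ioo (0:ℝ) 1)ᶜ := by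
    ext g; simp [not_forall]
  rw [hset]
  apply measure_iUnion_null
  intro i
  rw [pi_eval_measure, unif_apply, Set.compl_inter_self]
  exact measure_empty

lemma measurableSet_actF_eq (N : InfoNetwork V) (A : Set V) (τ : ℕ) (s₀ : Finset V) :
    MeasurableSet {θ : V → ℝ | actF N A θ τ = s₀} := by
  classical
  have hset : {θ : V → ℝ | actF N A θ τ = s₀}
      = ⋂ w : V, {θ : V → ℝ | w ∈ actF N A θ τ ↔ w ∈ s₀} := by
    ext θ
    simp only [Set.mem_setOf_eq, Set.mem_iInter, Finset.ext_iff]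
  rw [hset]
  apply MeasurableSet.iInter
  intro w
  by_cases hw : w ∈ s₀
  · simp only [hw, iff_true]
    exact measurableSet_mem_actF N A τ w
  · simp only [hw, iff_false]
    exact (measurableSet_mem_actF N A τ w).compl

lemma measurableSet_pick_coord {T : ℕ} (i : V × Fin T) (s : Finset V) (p : V → ℝ) (d u : V) :
    MeasurableSet {ξ : V × Fin T → ℝ | pick s p (ξ i) d = u} := by
  have hset : {ξ : V × Fin T → ℝ | pick s p (ξ i) d = u}
      = (fun ξ : V × Fin T → ℝ => ξ i) ⁻¹' {x : ℝ | pick s p x d = u} := rfl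
  rw [hset]
  exact measurable_pi_apply i (measurable_pick_eq s p d u)

lemma measurableSet_pickAux_event (N : InfoNetwork V) (A : Set V) (v u : V) (τ : ℕ)
    {T : ℕ} (i : V × Fin T) :
    MeasurableSet {ω : (V → ℝ) × (V × Fin T → ℝ) |
      pickAux N v (actF N A ω.1 τ) (ω.1 v) (ω.2 i) = u} := by
  classical
  have hset : {ω : (V → ℝ) × (V × Fin T → ℝ) |
        pickAux N v (actF N A ω.1 τ) (ω.1 v) (ω.2 i) = u}
      = ⋃ s₀ : Finset V,
        (({θ : V → ℝ | actF N A θ τ = s₀} ∩ {θ : V → ℝ | θ v ≤ ∑ u' ∈ s₀, N.b v u'}) ×ˢ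
          {ξ : V × Fin T → ℝ | pick (Finset.univ.filter fun w => 0 < N.b v w ∧ w ∈ s₀)
            (fun w => N.b v w / ∑ u' ∈ s₀, N.b v u') (ξ i) N.d = u}) ∪
        (({θ : V → ℝ | actF N A θ τ = s₀} ∩ {θ : V → ℝ | θ v ≤ ∑ u' ∈ s₀, N.b v u'}ᶜ) ×ˢ
          {ξ : V × Fin T → ℝ | pick (Finset.univ.filter fun w => 0 < N.b v w ∧ w ∉ s₀)
            (fun w => N.b v w / (1 - ∑ u' ∈ s₀, N.b v u')) (ξ i) N.d = u}) := by
    ext ⟨θ, ξ⟩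
    simp only [Set.mem_setOf_eq, Set.mem_iUnion, Set.mem_union, Set.mem_prod,
      Set.mem_inter_iff, Set.mem_compl_iff]
    constructor
    · intro h
      refine ⟨actF N A θ τ, ?_⟩
      by_cases hb : θ v ≤ ∑ u' ∈ actF N A θ τ, N.b v u'
      · left
        refine ⟨⟨rfl, hb⟩, ?_⟩
        rw [pickAux, if_pos hb] at h
        exact h
      · right
        refine ⟨⟨rfl, hb⟩, ?_⟩
        rw [pickAux, if_neg hb] at h
        exact h
    · rintro ⟨s₀, (⟨⟨ha, hb⟩, hp⟩ | ⟨⟨ha, hb⟩, hp⟩)⟩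
      · rw [ha, pickAux, if_pos hb]
        exact hp
      · rw [ha, pickAux, if_neg hb]
        exact hp
  rw [hset]
  apply MeasurableSet.iUnion
  intro s₀
  apply MeasurableSet.union
  · apply MeasurableSet.prod
    · exact (measurableSet_actF_eq N A τ s₀).inter
        (measurableSet_le (measurable_pi_apply v) measurable_const)
    · exact measurableSet_pick_coord i _ _ _ _
  · apply MeasurableSet.prod
    · exact (measurableSet_actF_eq N A τ s₀).inter
        ((measurableSet_le (measurable_pi_apply v) measurable_const)).compl
    · exact measurableSet_pick_coord i _ _ _ _

end Main
end PEAux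

/-- Acyclicity implies independence of choice: in the Path-Effect process on
an acyclic network, for a non-void node `v`, an out-neighbour `u ∈ Γ(v)` and a time
`1 ≤ t ≤ T`, the event `P^t_v[t] = u` is independent of the trajectories `Π_W` of the
out-neighbourhood `W = Γ(v)`, and has probability `b v u`. -/
theorem pePath_step_indep {V : Type*} [Fintype V] [LinearOrder V] (N : InfoNetwork V)
    (hacyc : N.Acyclic) (T : ℕ) (A : Set V) (hA : A ⊆ {x : V | x ≠ N.d})
    (v : V) (hv : v ≠ N.d) (u : V) (hu : 0 < N.b v u)
    (t : ℕ) (ht1 : 1 ≤ t) (htT : t ≤ T) (Q : V → ℕ → Bool) :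
    peMeasure V T ({ω | pePath N T A ω.1 ω.2 t v t = u} ∩
        {ω | ∀ w : V, 0 < N.b v w → ∀ s ∈ Finset.Icc 1 T,
          ((pePath N T A ω.1 ω.2 s w 0 ∈ A) ↔ Q w s = true)}) =
      ENNReal.ofReal (N.b v u) *
        peMeasure V T {ω | ∀ w : V, 0 < N.b v w → ∀ s ∈ Finset.Icc 1 T,
          ((pePath N T A ω.1 ω.2 s w 0 ∈ A) ↔ Q w s = true)} := by
  classical
  obtain ⟨τ, rfl⟩ : ∃ τ, t = τ + 1 := ⟨t - 1, by omega⟩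
  have hτT : τ < T := by omega
  set μθ : Measure (V → ℝ) := Measure.pi fun _ : V => unifMeasure with hμθ
  set μξ : Measure (V × Fin T → ℝ) := Measure.pi fun _ : V × Fin T => unifMeasure with hμξ
  have hpe : peMeasure V T = μθ.prod μξ := rfl
  set i : V × Fin T := (v, ⟨τ, hτT⟩) with hi
  set G : Set (V → ℝ) := {θ | ∀ w, 0 < N.b v w →
    ∀ s ∈ Finset.Icc 1 T, (w ∈ PEAux.actF N A θ s ↔ Q w s = true)} with hG
  set P : Set ((V → ℝ) × (V × Fin T → ℝ)) :=
    {ω | PEAux.pickAux N v (PEAux.actF N A ω.1 τ) (ω.1 v) (ω.2 i) = u} with hP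
  -- measurability of G
  have hGmeas : MeasurableSet G := by
    have hset : G = ⋂ w ∈ {w : V | 0 < N.b v w}, ⋂ s ∈ (Finset.Icc 1 T : Finset ℕ),
        {θ : V → ℝ | w ∈ PEAux.actF N A θ s ↔ Q w s = true} := by
      ext θ
      simp only [hG, Set.mem_setOf_eq, Set.mem_iInter]
    rw [hset]
    apply MeasurableSet.biInter (Set.to_countable _)
    intro w _
    apply MeasurableSet.biInter (Set.to_countable _)
    intro s _
    by_cases hq : Q w s = true
    · have hset2 : {θ : V → ℝ | w ∈ PEAux.actF N A θ s ↔ Q w s = true}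
          = {θ : V → ℝ | w ∈ PEAux.actF N A θ s} := by
        ext θ; simp [hq]
      rw [hset2]
      exact PEAux.measurableSet_mem_actF N A s w
    · have hset2 : {θ : V → ℝ | w ∈ PEAux.actF N A θ s ↔ Q w s = true}
          = {θ : V → ℝ | w ∈ PEAux.actF N A θ s}ᶜ := by
        ext θ; simp [hq]
      rw [hset2]
      exact (PEAux.measurableSet_mem_actF N A s w).compl
  have hPmeas : MeasurableSet P := PEAux.measurableSet_pickAux_event N A v u τ i
  have hD1meas : MeasurableSet ((G ×ˢ (Set.univ : Set (V × Fin T → ℝ))) ∩ P) :=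
    (hGmeas.prod MeasurableSet.univ).inter hPmeas
  -- a.e. goodness
  have haeθ : ∀ᵐ ω ∂(μθ.prod μξ), ∀ w, ω.1 w ∈ Set.Ioo (0:ℝ) 1 := by
    rw [ae_iff]
    have hset : {ω : (V → ℝ) × (V × Fin T → ℝ) | ¬ ∀ w, ω.1 w ∈ Set.Ioo (0:ℝ) 1}
        = {θ : V → ℝ | ¬ ∀ w, θ w ∈ Set.Ioo (0:ℝ) 1} ×ˢ Set.univ := by
      ext ⟨a, b⟩; simp
    rw [hset, Measure.prod_prod]
    rw [ae_iff.mp (PEAux.ae_coord_good (ι := V)), zero_mul]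
  have haeξ : ∀ᵐ ω ∂(μθ.prod μξ), ∀ p, ω.2 p ∈ Set.Ioo (0:ℝ) 1 := by
    rw [ae_iff]
    have hset : {ω : (V → ℝ) × (V × Fin T → ℝ) | ¬ ∀ p, ω.2 p ∈ Set.Ioo (0:ℝ) 1}
        = Set.univ ×ˢ {ξ : V × Fin T → ℝ | ¬ ∀ p, ξ p ∈ Set.Ioo (0:ℝ) 1} := by
      ext ⟨a, b⟩; simp
    rw [hset, Measure.prod_prod]
    rw [ae_iff.mp (PEAux.ae_coord_good (ι := V × Fin T)), mul_zero]
  -- Step 1 : identify the events up to null sets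
  have h1 : peMeasure V T ({ω | pePath N T A ω.1 ω.2 (τ+1) v (τ+1) = u} ∩
      {ω | ∀ w : V, 0 < N.b v w → ∀ s ∈ Finset.Icc 1 T,
        ((pePath N T A ω.1 ω.2 s w 0 ∈ A) ↔ Q w s = true)})
      = (μθ.prod μξ) ((G ×ˢ Set.univ) ∩ P) := by
    rw [hpe]
    apply measure_congr
    rw [Filter.eventuallyEq_set]
    filter_upwards [haeθ, haeξ] with ω hθ hξ
    simp only [Set.mem_inter_iff, Set.mem_setOf_eq, Set.mem_prod, Set.mem_univ, and_true]
    have hE1 : pePath N T A ω.1 ω.2 (τ+1) v (τ+1) = u ↔ ω ∈ P := by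
      rw [hP, Set.mem_setOf_eq, ← PEAux.pePath_last' hθ hξ hτT v]
    have hE2 : (∀ w : V, 0 < N.b v w → ∀ s ∈ Finset.Icc 1 T,
        ((pePath N T A ω.1 ω.2 s w 0 ∈ A) ↔ Q w s = true)) ↔ ω.1 ∈ G := by
      rw [hG, Set.mem_setOf_eq]
      apply forall_congr'; intro w
      apply imp_congr_right; intro hw
      apply forall_congr'; intro s
      apply imp_congr_right; intro hs
      rw [PEAux.pePath_mem_iff hθ hξ s (Finset.mem_Icc.mp hs).2 w]
    rw [hE1, hE2]
    tauto
  have h2 : peMeasure V T {ω | ∀ w : V, 0 < N.b v w → ∀ s ∈ Finset.Icc 1 T,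
      ((pePath N T A ω.1 ω.2 s w 0 ∈ A) ↔ Q w s = true)} = μθ G := by
    rw [hpe]
    have : (μθ.prod μξ) {ω | ∀ w : V, 0 < N.b v w → ∀ s ∈ Finset.Icc 1 T,
        ((pePath N T A ω.1 ω.2 s w 0 ∈ A) ↔ Q w s = true)}
        = (μθ.prod μξ) (G ×ˢ Set.univ) := by
      apply measure_congr
      rw [Filter.eventuallyEq_set]
      filter_upwards [haeθ, haeξ] with ω hθ hξ
      simp only [Set.mem_setOf_eq, Set.mem_prod, Set.mem_univ, and_true]
      rw [hG, Set.mem_setOf_eq]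
      apply forall_congr'; intro w
      apply imp_congr_right; intro hw
      apply forall_congr'; intro s
      apply imp_congr_right; intro hs
      rw [PEAux.pePath_mem_iff hθ hξ s (Finset.mem_Icc.mp hs).2 w]
    rw [this, Measure.prod_prod, measure_univ, mul_one]
  rw [h1, h2]
  -- Step 3 : slice by Fubini
  have h3 : (μθ.prod μξ) ((G ×ˢ Set.univ) ∩ P)
      = ∫⁻ θ, G.indicator (fun θ =>
          unifMeasure {x | PEAux.pickAux N v (PEAux.actF N A θ τ) (θ v) x = u}) θ ∂μθ := by
    rw [Measure.prod_apply hD1meas]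
    apply lintegral_congr
    intro θ
    by_cases hθG : θ ∈ G
    · rw [Set.indicator_of_mem hθG]
      have hslice : Prod.mk θ ⁻¹' ((G ×ˢ Set.univ) ∩ P)
          = (fun ξ : V × Fin T → ℝ => ξ i) ⁻¹'
              {x | PEAux.pickAux N v (PEAux.actF N A θ τ) (θ v) x = u} := by
        ext ξ
        simp only [Set.mem_preimage, Set.mem_inter_iff, Set.mem_prod, Set.mem_univ,
          and_true, Set.mem_setOf_eq, hP]
        tauto
      rw [hslice, hμξ, PEAux.pi_eval_measure]
    · rw [Set.indicator_of_notMem hθG]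
      have hslice : Prod.mk θ ⁻¹' ((G ×ˢ Set.univ) ∩ P) = ∅ := by
        ext ξ
        simp [hθG]
      rw [hslice, measure_empty]
  rw [h3]
  -- Step 5/6 : a.e. rewrite the inner measure by an explicit formula
  set Fv : (V → ℝ) → ℝ := fun θ => ∑ u' ∈ PEAux.actF N A θ τ, N.b v u' with hFv
  set mE : (V → ℝ) → ENNReal := fun θ =>
    (if u ∈ PEAux.actF N A θ τ
     then (if θ v ≤ Fv θ then ENNReal.ofReal (N.b v u / Fv θ) else 0)
     else (if θ v ≤ Fv θ then 0 else ENNReal.ofReal (N.b v u / (1 - Fv θ)))) with hmE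
  have haev : ∀ᵐ θ ∂μθ, θ v ∈ Set.Ioo (0:ℝ) 1 := by
    filter_upwards [PEAux.ae_coord_good (ι := V)] with θ hθ
    exact hθ v
  have h6 : ∫⁻ θ, G.indicator (fun θ =>
        unifMeasure {x | PEAux.pickAux N v (PEAux.actF N A θ τ) (θ v) x = u}) θ ∂μθ
      = ∫⁻ θ, G.indicator mE θ ∂μθ := by
    apply lintegral_congr_ae
    filter_upwards [haev] with θ hθv
    by_cases hθG : θ ∈ G
    · rw [Set.indicator_of_mem hθG, Set.indicator_of_mem hθG, hmE]
      exact PEAux.unif_pickAux N hu (PEAux.actF N A θ τ) hθv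
    · rw [Set.indicator_of_notMem hθG, Set.indicator_of_notMem hθG]
  rw [h6]
  -- Step 7 : integrate out the coordinate v
  have hFvmeas : Measurable Fv := PEAux.measurable_actF_sum N A τ v
  have hmEmeas : Measurable mE := by
    apply Measurable.ite (PEAux.measurableSet_mem_actF N A τ u)
    · apply Measurable.ite (measurableSet_le (measurable_pi_apply v) hFvmeas)
      · exact ENNReal.measurable_ofReal.comp (measurable_const.div hFvmeas)
      · exact measurable_const
    · apply Measurable.ite (measurableSet_le (measurable_pi_apply v) hFvmeas)
      · exact measurable_const
      · exact ENNReal.measurable_ofReal.comp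
          (measurable_const.div (measurable_const.sub hFvmeas))
  have hhmeas : Measurable (G.indicator mE) := hmEmeas.indicator hGmeas
  set g : (V → ℝ) → ENNReal := G.indicator (fun _ => ENNReal.ofReal (N.b v u)) with hg
  have hgmeas : Measurable g := measurable_const.indicator hGmeas
  have hnr : ∀ w, 0 < N.b v w →
      ¬ Relation.ReflTransGen (fun a c : V => 0 < N.b a c) w v :=
    fun w hw => PEAux.no_reach_back N hacyc hv hw
  have key : ∀ x : V → ℝ,
      ∫⁻ xv, (G.indicator mE) (Function.update x v xv) ∂unifMeasure
        = ∫⁻ xv, g (Function.update x v xv) ∂unifMeasure := by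
    intro x
    have hGinv : ∀ xv, (Function.update x v xv ∈ G ↔ x ∈ G) := by
      intro xv
      simp only [hG, Set.mem_setOf_eq]
      constructor
      · intro H w hw s hs
        have := H w hw s hs
        rwa [PEAux.actF_update_indep v x xv s w (hnr w hw)] at this
      · intro H w hw s hs
        rw [PEAux.actF_update_indep v x xv s w (hnr w hw)]
        exact H w hw s hs
    have hFinv : ∀ xv, Fv (Function.update x v xv) = Fv x := by
      intro xv
      simp only [hFv]
      rw [PEAux.sum_actF, PEAux.sum_actF]
      apply Finset.sum_congr rfl
      intro w _
      by_cases hbw : 0 < N.b v w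
      · simp only [PEAux.actF_update_indep v x xv τ w (hnr w hbw)]
        congr!
      · have hzero : N.b v w = 0 := le_antisymm (not_lt.mp hbw) (N.b_nonneg v w)
        simp [hzero]
    have huSinv : ∀ xv, (u ∈ PEAux.actF N A (Function.update x v xv) τ
        ↔ u ∈ PEAux.actF N A x τ) :=
      fun xv => PEAux.actF_update_indep v x xv τ u (hnr u hu)
    by_cases hxG : x ∈ G
    · have hupdG : ∀ xv, Function.update x v xv ∈ G := fun xv => (hGinv xv).mpr hxG
      have hlhs : ∀ xv, (G.indicator mE) (Function.update x v xv)
          = (if u ∈ PEAux.actF N A x τ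
             then (if xv ≤ Fv x then ENNReal.ofReal (N.b v u / Fv x) else 0)
             else (if xv ≤ Fv x then 0 else ENNReal.ofReal (N.b v u / (1 - Fv x)))) := by
        intro xv
        rw [Set.indicator_of_mem (hupdG xv), hmE]
        simp only [huSinv xv, hFinv xv, Function.update_self]
      have hrhs : ∀ xv, g (Function.update x v xv) = ENNReal.ofReal (N.b v u) := by
        intro xv
        rw [hg, Set.indicator_of_mem (hupdG xv)]
      simp only [hlhs, hrhs]
      rw [lintegral_const]
      rw [measure_univ, mul_one]
      -- arithmetic facts about Fv x
      have hF0 : 0 ≤ Fv x :=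
        Finset.sum_nonneg fun w _ => N.b_nonneg v w
      have hF1 : Fv x ≤ 1 := by
        rw [← N.row_sum v]
        apply Finset.sum_le_sum_of_subset_of_nonneg (Finset.subset_univ _)
        intro w _ _; exact N.b_nonneg v w
      by_cases huS : u ∈ PEAux.actF N A x τ
      · have hbF : N.b v u ≤ Fv x :=
          Finset.single_le_sum (fun w _ => N.b_nonneg v w) huS
        have hFpos : 0 < Fv x := lt_of_lt_of_le hu hbF
        have heq : (fun xv : ℝ => if u ∈ PEAux.actF N A x τ
            then (if xv ≤ Fv x then ENNReal.ofReal (N.b v u / Fv x) else 0)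
            else (if xv ≤ Fv x then 0 else ENNReal.ofReal (N.b v u / (1 - Fv x))))
            = (Set.Iic (Fv x)).indicator (fun _ => ENNReal.ofReal (N.b v u / Fv x)) := by
          funext xv
          rw [Set.indicator_apply]
          simp only [huS, if_true, Set.mem_Iic]
        rw [heq, lintegral_indicator_const measurableSet_Iic,
          PEAux.unif_Iic hF0 hF1, ← ENNReal.ofReal_mul
            (div_nonneg (N.b_nonneg v u) (le_of_lt hFpos)),
          div_mul_cancel₀ _ hFpos.ne']
      · have hbF : Fv x ≤ 1 - N.b v u := by
          have hsub : PEAux.actF N A x τ ⊆ Finset.univ.erase u := by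
            intro w hw
            exact Finset.mem_erase.mpr ⟨fun h => huS (h ▸ hw), Finset.mem_univ w⟩
          have h1 : Fv x ≤ ∑ w ∈ Finset.univ.erase u, N.b v w := by
            apply Finset.sum_le_sum_of_subset_of_nonneg hsub
            intro w _ _; exact N.b_nonneg v w
          have h2 : N.b v u + ∑ w ∈ Finset.univ.erase u, N.b v w = 1 := by
            rw [Finset.add_sum_erase Finset.univ (N.b v) (Finset.mem_univ u)]
            exact N.row_sum v
          linarith
        have hFpos : 0 < 1 - Fv x := by linarith
        have heq : (fun xv : ℝ => if u ∈ PEAux.actF N A x τ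
            then (if xv ≤ Fv x then ENNReal.ofReal (N.b v u / Fv x) else 0)
            else (if xv ≤ Fv x then 0 else ENNReal.ofReal (N.b v u / (1 - Fv x))))
            = (Set.Ioi (Fv x)).indicator
                (fun _ => ENNReal.ofReal (N.b v u / (1 - Fv x))) := by
          funext xv
          rw [Set.indicator_apply]
          simp only [huS, if_false, Set.mem_Ioi]
          by_cases hxv : xv ≤ Fv x
          · rw [if_pos hxv, if_neg (not_lt.mpr hxv)]
          · rw [if_neg hxv, if_pos (not_le.mp hxv)]
        rw [heq, lintegral_indicator_const measurableSet_Ioi,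
          PEAux.unif_Ioi hF0, ← ENNReal.ofReal_mul
            (div_nonneg (N.b_nonneg v u) (le_of_lt hFpos)),
          div_mul_cancel₀ _ hFpos.ne']
    · have hupdG : ∀ xv, Function.update x v xv ∉ G := fun xv h => hxG ((hGinv xv).mp h)
      have hlhs : ∀ xv, (G.indicator mE) (Function.update x v xv) = 0 :=
        fun xv => Set.indicator_of_notMem (hupdG xv) _
      have hrhs : ∀ xv, g (Function.update x v xv) = 0 :=
        fun xv => Set.indicator_of_notMem (hupdG xv) _
      simp only [hlhs, hrhs]
  have hmarg : ∫⁻ θ, G.indicator mE θ ∂μθ = ∫⁻ θ, g θ ∂μθ := by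
    rw [hμθ, lintegral_eq_lmarginal_univ (fun _ => (0:ℝ)),
      lintegral_eq_lmarginal_univ (μ := fun _ : V => unifMeasure) (fun _ => (0:ℝ)),
      lmarginal_erase' _ hhmeas (Finset.mem_univ v),
      lmarginal_erase' _ hgmeas (Finset.mem_univ v)]
    congr 1
    funext x
    exact key x
  rw [hmarg, hg, lintegral_indicator_const hGmeas]
end
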